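/- arXiv:1609.05005 — 3 statements merged into one kernel-verified Lean document; each statement's English description precedes it below -/
import Mathlib

section
/- For every n ≥ 0 there exists a map b from the set of triples (Γ₁,Γ₂,Γ₃) ⊢ [n,n+1,n+2] to the set of pairs (Y,S), where Y is a Young diagram with n+3 boxes and S is a 2-element set of removable boxes of Y, such that every fiber of b has exactly two elements, and for every such pair (Y,S) the two elements Γ, H of the fiber b⁻¹(Y,S) satisfy pos_∞(Γ) = (n+2) − ℓ(Y) and pos_∞(H) = (n+3) − ℓ(Y). Consequently ∑_{Γ⊢[n,n+1,n+2]} q^{pos_∞(Γ)} = (1+q) · ∑_{(Y,S)} q^{(n+2)−ℓ(Y)}, the latter sum running over all Young diagrams Y with n+3 boxes and all 2-element sets S of removable boxes of Y. -/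
/-!
Statement 5: there is a 2-to-1 map from triples (Γ₁,Γ₂,Γ₃) ⊢ [n,n+1,n+2] to pairs (Y,S)
of a Young diagram Y with n+3 boxes and a 2-element set S of removable boxes of Y, such
that the two elements of each fiber have pos_∞ equal to (n+2)−ℓ(Y) and (n+3)−ℓ(Y);
consequently Σ_Γ q^{pos_∞(Γ)} = (1+q)·Σ_{(Y,S)} q^{(n+2)−ℓ(Y)}.
-/

open Polynomial

/-- The number of nonempty columns of a Young diagram. -/
def ell (Γ : YoungDiagram) : ℕ := (Γ.cells.filter fun c => c.2 = 0).card

/-- A triple of nested Young diagrams `(Γ₁,Γ₂,Γ₃) ⊢ [n,n+1,n+2]`, recorded together with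
the (uniquely determined) added boxes `b₁ ∈ Γ₂ ∖ Γ₁` and `b₂ ∈ Γ₃ ∖ Γ₂`. -/
structure TripleFlag (n : ℕ) where
  Γ₁ : YoungDiagram
  Γ₂ : YoungDiagram
  Γ₃ : YoungDiagram
  b₁ : ℕ × ℕ
  b₂ : ℕ × ℕ
  card₁ : Γ₁.card = n
  not_mem₁ : b₁ ∉ Γ₁
  cells₂ : Γ₂.cells = insert b₁ Γ₁.cells
  not_mem₂ : b₂ ∉ Γ₂
  cells₃ : Γ₃.cells = insert b₂ Γ₂.cells

/-- `pos_∞` of a triple: `(n+2) − ℓ(Γ₃) + 1` if `v₂ ≥ v₁ + 2`, and `(n+2) − ℓ(Γ₃)`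
otherwise. -/
def posInf {n : ℕ} (T : TripleFlag n) : ℕ :=
  if T.b₁.2 + 2 ≤ T.b₂.2 then (n + 2) - ell T.Γ₃ + 1 else (n + 2) - ell T.Γ₃

/-- A Young diagram `Y` with `n+3` boxes together with a 2-element set `S` of removable
boxes of `Y` (boxes whose removal leaves a Young diagram). -/
structure MarkedPair (n : ℕ) where
  Y : YoungDiagram
  S : Finset (ℕ × ℕ)
  cardY : Y.card = n + 3
  cardS : S.card = 2
  removable : ∀ c ∈ S, c ∈ Y ∧ IsLowerSet (↑(Y.cells.erase c) : Set (ℕ × ℕ))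


open YoungDiagram

/-- `c` is a removable corner of `Δ`. -/
def Rem (Δ : YoungDiagram) (c : ℕ × ℕ) : Prop :=
  c ∈ Δ ∧ (c.1 + 1, c.2) ∉ Δ ∧ (c.1, c.2 + 1) ∉ Δ

/-- `c` is an addable corner of `Δ`. -/
def AddC (Δ : YoungDiagram) (c : ℕ × ℕ) : Prop :=
  c ∉ Δ ∧ (c.1 = 0 ∨ (c.1 - 1, c.2) ∈ Δ) ∧ (c.2 = 0 ∨ (c.1, c.2 - 1) ∈ Δ)

lemma AddC.lowerSet {Δ : YoungDiagram} {c : ℕ × ℕ} (h : AddC Δ c) :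
    IsLowerSet (insert c ↑Δ.cells : Set (ℕ × ℕ)) := by
  obtain ⟨c1, c2⟩ := c
  rintro ⟨x1, x2⟩ ⟨y1, y2⟩ hxy hx
  obtain ⟨h1, h2⟩ := Prod.mk_le_mk.1 hxy
  simp only [Set.mem_insert_iff, Finset.coe_insert, Set.mem_insert_iff, Finset.mem_coe,
    mem_cells, Prod.mk.injEq] at hx ⊢
  rcases hx with ⟨e1, e2⟩ | hx
  · by_cases hy1 : y1 = c1 ∧ y2 = c2
    · exact Or.inl hy1
    · right
      have h1' : y1 ≤ c1 := by omega
      have h2' : y2 ≤ c2 := by omega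
      rcases Nat.lt_or_ge y1 c1 with hlt | hge
      · rcases h.2.1 with h0 | hm
        · omega
        · exact Δ.up_left_mem (show y1 ≤ c1 - 1 by omega) h2' hm
      · have e3 : y1 = c1 := by omega
        have hlt2 : y2 < c2 := by
          rcases lt_or_eq_of_le h2' with h' | h'
          · exact h'
          · exact absurd ⟨e3, h'⟩ hy1
        rcases h.2.2 with h0 | hm
        · omega
        · exact Δ.up_left_mem (le_of_eq e3) (show y2 ≤ c2 - 1 by omega) hm
  · exact Or.inr (Δ.isLowerSet hxy hx)

lemma addC_of_lowerSet {Δ : YoungDiagram} {c : ℕ × ℕ} (hc : c ∉ Δ)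
    (h : IsLowerSet (insert c ↑Δ.cells : Set (ℕ × ℕ))) : AddC Δ c := by
  obtain ⟨c1, c2⟩ := c
  refine ⟨hc, ?_, ?_⟩
  · rcases Nat.eq_zero_or_pos c1 with h0 | h0
    · exact Or.inl h0
    · right
      have hm : (c1 - 1, c2) ∈ insert (c1, c2) (↑Δ.cells : Set (ℕ × ℕ)) :=
        h (Prod.mk_le_mk.2 ⟨by omega, le_rfl⟩) (Set.mem_insert _ _)
      rcases hm with h' | h'
      · exfalso; rw [Prod.mk.injEq] at h'; omega
      · simpa using h'
  · rcases Nat.eq_zero_or_pos c2 with h0 | h0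
    · exact Or.inl h0
    · right
      have hm : (c1, c2 - 1) ∈ insert (c1, c2) (↑Δ.cells : Set (ℕ × ℕ)) :=
        h (Prod.mk_le_mk.2 ⟨le_rfl, by omega⟩) (Set.mem_insert _ _)
      rcases hm with h' | h'
      · exfalso; rw [Prod.mk.injEq] at h'; omega
      · simpa using h'

lemma Rem.lowerSet {Δ : YoungDiagram} {c : ℕ × ℕ} (h : Rem Δ c) :
    IsLowerSet (↑(Δ.cells.erase c) : Set (ℕ × ℕ)) := by
  obtain ⟨c1, c2⟩ := c
  rintro ⟨x1, x2⟩ ⟨y1, y2⟩ hxy hx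
  obtain ⟨h1, h2⟩ := Prod.mk_le_mk.1 hxy
  simp only [Finset.coe_erase, Set.mem_diff, Finset.mem_coe, mem_cells,
    Set.mem_singleton_iff, Prod.mk.injEq, not_and] at hx ⊢
  refine ⟨Δ.isLowerSet hxy hx.1, ?_⟩
  rintro rfl rfl
  rcases Nat.lt_or_ge y1 x1 with hlt | hge
  · exact h.2.1 (Δ.up_left_mem (show y1 + 1 ≤ x1 by omega) h2 hx.1)
  · have e1 : x1 = y1 := by omega
    rcases lt_or_eq_of_le h2 with h' | h'
    · exact h.2.2 (Δ.up_left_mem (le_of_eq e1.symm) (show y2 + 1 ≤ x2 by omega) hx.1)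
    · exact hx.2 e1 h'.symm

lemma rem_of_lowerSet {Δ : YoungDiagram} {c : ℕ × ℕ} (hc : c ∈ Δ)
    (h : IsLowerSet (↑(Δ.cells.erase c) : Set (ℕ × ℕ))) : Rem Δ c := by
  obtain ⟨c1, c2⟩ := c
  refine ⟨hc, ?_, ?_⟩
  · intro hmem
    have hm : ((c1, c2) : ℕ × ℕ) ∈ (↑(Δ.cells.erase (c1, c2)) : Set (ℕ × ℕ)) := by
      refine h (Prod.mk_le_mk.2 ⟨Nat.le_succ _, le_rfl⟩) ?_
      simp only [Finset.coe_erase, Set.mem_diff, Finset.mem_coe, mem_cells,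
        Set.mem_singleton_iff, Prod.mk.injEq, not_and]
      exact ⟨hmem, by omega⟩
    simp at hm
  · intro hmem
    have hm : ((c1, c2) : ℕ × ℕ) ∈ (↑(Δ.cells.erase (c1, c2)) : Set (ℕ × ℕ)) := by
      refine h (Prod.mk_le_mk.2 ⟨le_rfl, Nat.le_succ _⟩) ?_
      simp only [Finset.coe_erase, Set.mem_diff, Finset.mem_coe, mem_cells,
        Set.mem_singleton_iff, Prod.mk.injEq, not_and]
      exact ⟨hmem, by omega⟩
    simp at hm

lemma AddC.fst_eq {Δ : YoungDiagram} {c : ℕ × ℕ} (h : AddC Δ c) : c.1 = Δ.colLen c.2 := by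
  have h1 : ¬ c.1 < Δ.colLen c.2 := fun hl => h.1 (mem_iff_lt_colLen.2 hl)
  rcases h.2.1 with h0 | hm
  · have h2 : ¬ (0 : ℕ) < Δ.colLen c.2 := by
      intro hl
      exact h.1 (mem_iff_lt_colLen.2 (by omega))
    omega
  · have := mem_iff_lt_colLen.1 hm
    omega

lemma AddC.snd_eq {Δ : YoungDiagram} {c : ℕ × ℕ} (h : AddC Δ c) : c.2 = Δ.rowLen c.1 := by
  have h1 : ¬ c.2 < Δ.rowLen c.1 := fun hl => h.1 (mem_iff_lt_rowLen.2 hl)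
  rcases h.2.2 with h0 | hm
  · have h2 : ¬ (0 : ℕ) < Δ.rowLen c.1 := by
      intro hl
      exact h.1 (mem_iff_lt_rowLen.2 (by omega))
    omega
  · have := mem_iff_lt_rowLen.1 hm
    omega

lemma Rem.colLen_eq {Δ : YoungDiagram} {c : ℕ × ℕ} (h : Rem Δ c) :
    Δ.colLen c.2 = c.1 + 1 := by
  have h1 := mem_iff_lt_colLen.1 h.1
  have h2 : ¬ c.1 + 1 < Δ.colLen c.2 := fun hl => h.2.1 (mem_iff_lt_colLen.2 hl)
  omega

lemma Rem.rowLen_eq {Δ : YoungDiagram} {c : ℕ × ℕ} (h : Rem Δ c) :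
    Δ.rowLen c.1 = c.2 + 1 := by
  have h1 := mem_iff_lt_rowLen.1 h.1
  have h2 : ¬ c.2 + 1 < Δ.rowLen c.1 := fun hl => h.2.2 (mem_iff_lt_rowLen.2 hl)
  omega
-- ===== part 2: ell, triple helpers =====
lemma ell_eq_colLen (Γ : YoungDiagram) : ell Γ = Γ.colLen 0 := by
  rw [YoungDiagram.colLen_eq_card]
  rfl

lemma colLen_le_card (Γ : YoungDiagram) (j : ℕ) : Γ.colLen j ≤ Γ.card := by
  rw [YoungDiagram.colLen_eq_card]
  exact Finset.card_le_card fun c hc => (YoungDiagram.mem_col_iff.1 hc).1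

lemma rowLen_le_card (Γ : YoungDiagram) (i : ℕ) : Γ.rowLen i ≤ Γ.card := by
  rw [YoungDiagram.rowLen_eq_card]
  exact Finset.card_le_card fun c hc => (YoungDiagram.mem_row_iff.1 hc).1

lemma ell_le_card (Γ : YoungDiagram) : ell Γ ≤ Γ.card := Finset.card_filter_le _ _

lemma mem_lt_card {Γ : YoungDiagram} {c : ℕ × ℕ} (h : c ∈ Γ) :
    c.1 < Γ.card ∧ c.2 < Γ.card := by
  obtain ⟨i, j⟩ := c
  constructor
  · exact lt_of_lt_of_le (YoungDiagram.mem_iff_lt_colLen.1 h) (colLen_le_card Γ j)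
  · exact lt_of_lt_of_le (YoungDiagram.mem_iff_lt_rowLen.1 h) (rowLen_le_card Γ i)

namespace TripleFlag

variable {n : ℕ} (T : TripleFlag n)

lemma mem₁ : T.b₁ ∈ T.Γ₂ := by
  rw [← YoungDiagram.mem_cells, T.cells₂]; exact Finset.mem_insert_self _ _

lemma cells₁ : T.Γ₁.cells = T.Γ₂.cells.erase T.b₁ := by
  rw [T.cells₂, Finset.erase_insert (by simpa using T.not_mem₁)]

lemma hRem : Rem T.Γ₂ T.b₁ :=
  rem_of_lowerSet T.mem₁ (by rw [← T.cells₁]; exact T.Γ₁.isLowerSet)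

lemma hAdd : AddC T.Γ₂ T.b₂ := by
  refine addC_of_lowerSet T.not_mem₂ ?_
  have he : (insert T.b₂ ↑T.Γ₂.cells : Set (ℕ × ℕ)) = ↑T.Γ₃.cells := by
    rw [T.cells₃]; simp
  rw [he]; exact T.Γ₃.isLowerSet

lemma card₂ : T.Γ₂.card = n + 1 := by
  have : T.Γ₂.cells.card = T.Γ₁.cells.card + 1 := by
    rw [T.cells₂, Finset.card_insert_of_notMem (by simpa using T.not_mem₁)]
  simpa [YoungDiagram.card, T.card₁] using this

lemma card₃ : T.Γ₃.card = n + 2 := by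
  have : T.Γ₃.cells.card = T.Γ₂.cells.card + 1 := by
    rw [T.cells₃, Finset.card_insert_of_notMem (by simpa using T.not_mem₂)]
  simpa [YoungDiagram.card, T.card₂] using this

lemma ext' {T T' : TripleFlag n} (h2 : T.Γ₂ = T'.Γ₂) (hb1 : T.b₁ = T'.b₁)
    (hb2 : T.b₂ = T'.b₂) : T = T' := by
  have h1 : T.Γ₁ = T'.Γ₁ := by
    apply YoungDiagram.ext
    rw [T.cells₁, T'.cells₁, h2, hb1]
  have h3 : T.Γ₃ = T'.Γ₃ := by
    apply YoungDiagram.ext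
    rw [T.cells₃, T'.cells₃, h2, hb2]
  cases T; cases T'
  simp_all

end TripleFlag

/-- Add a single addable box to a Young diagram. -/
def addBox (Δ : YoungDiagram) (c : ℕ × ℕ) (h : AddC Δ c) : YoungDiagram :=
  ⟨insert c Δ.cells, by rw [Finset.coe_insert]; exact h.lowerSet⟩

@[simp] lemma mem_addBox {Δ : YoungDiagram} {c x : ℕ × ℕ} {h : AddC Δ c} :
    x ∈ addBox Δ c h ↔ x = c ∨ x ∈ Δ := by
  change x ∈ (addBox Δ c h).cells ↔ _
  simp [addBox]

/-- Build a `TripleFlag` from its middle diagram, a removable and an addable corner. -/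
def mkTriple (n : ℕ) (Δ : YoungDiagram) (b₁ b₂ : ℕ × ℕ) (h₁ : Rem Δ b₁) (h₂ : AddC Δ b₂)
    (hc : Δ.card = n + 1) : TripleFlag n where
  Γ₁ := ⟨Δ.cells.erase b₁, by rw [Finset.coe_erase]; simpa [Finset.coe_erase] using h₁.lowerSet⟩
  Γ₂ := Δ
  Γ₃ := addBox Δ b₂ h₂
  b₁ := b₁
  b₂ := b₂
  card₁ := by simp [YoungDiagram.card, Finset.card_erase_of_mem ((YoungDiagram.mem_cells _).2 h₁.1), hc]
  not_mem₁ := by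
    change b₁ ∉ Finset.erase _ _
    simp
  cells₂ := (Finset.insert_erase (by simpa using h₁.1)).symm
  not_mem₂ := h₂.1
  cells₃ := rfl

@[simp] lemma mkTriple_Γ₂ {n : ℕ} {Δ : YoungDiagram} {b₁ b₂ : ℕ × ℕ} {h₁ : Rem Δ b₁} {h₂ : AddC Δ b₂} {hc : Δ.card = n + 1} : (mkTriple n Δ b₁ b₂ h₁ h₂ hc).Γ₂ = Δ := rfl
@[simp] lemma mkTriple_b₁ {n : ℕ} {Δ : YoungDiagram} {b₁ b₂ : ℕ × ℕ} {h₁ : Rem Δ b₁} {h₂ : AddC Δ b₂} {hc : Δ.card = n + 1} : (mkTriple n Δ b₁ b₂ h₁ h₂ hc).b₁ = b₁ := rfl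
@[simp] lemma mkTriple_b₂ {n : ℕ} {Δ : YoungDiagram} {b₁ b₂ : ℕ × ℕ} {h₁ : Rem Δ b₁} {h₂ : AddC Δ b₂} {hc : Δ.card = n + 1} : (mkTriple n Δ b₁ b₂ h₁ h₂ hc).b₂ = b₂ := rfl
@[simp] lemma mkTriple_Γ₃ {n : ℕ} {Δ : YoungDiagram} {b₁ b₂ : ℕ × ℕ} {h₁ : Rem Δ b₁} {h₂ : AddC Δ b₂} {hc : Δ.card = n + 1} :
    (mkTriple n Δ b₁ b₂ h₁ h₂ hc).Γ₃ = addBox Δ b₂ h₂ := rfl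

-- ===== part 3: pairs =====
lemma AddC.addBox' {Δ : YoungDiagram} {c c' : ℕ × ℕ} {h' : AddC Δ c'} (h : AddC Δ c)
    (hne : c ≠ c') : AddC (addBox Δ c' h') c := by
  obtain ⟨h1, h2, h3⟩ := h
  refine ⟨by simp [mem_addBox, hne, h1], ?_, ?_⟩
  · exact h2.imp id fun hm => by simp [mem_addBox, hm]
  · exact h3.imp id fun hm => by simp [mem_addBox, hm]

lemma ell_addBox {Δ : YoungDiagram} {c : ℕ × ℕ} (h : AddC Δ c) :
    ell (addBox Δ c h) = ell Δ + if c.2 = 0 then 1 else 0 := by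
  unfold ell
  change ((insert c Δ.cells).filter fun x => x.2 = 0).card = _
  rw [Finset.filter_insert]
  split_ifs with hc
  · rw [Finset.card_insert_of_notMem (by simp [h.1])]
  · simp

lemma MarkedPair.ext' {n : ℕ} {P P' : MarkedPair n} (hY : P.Y = P'.Y) (hS : P.S = P'.S) :
    P = P' := by
  cases P; cases P'; simp_all

/-- Build a `MarkedPair` from a diagram and two addable corners in distinct columns. -/
def mkPair (n : ℕ) (Δ : YoungDiagram) (c c' : ℕ × ℕ) (hc : AddC Δ c) (hc' : AddC Δ c')
    (hlt : c.2 < c'.2) (hΔ : Δ.card = n + 1) : MarkedPair n where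
  Y := addBox (addBox Δ c' hc') c (AddC.addBox' (h' := hc') hc (fun he => by rw [he] at hlt; omega))
  S := {c, c'}
  cardY := by
    have h1 : c ∉ insert c' Δ.cells := by
      simp only [Finset.mem_insert]
      rintro (rfl | hm)
      · omega
      · exact hc.1 hm
    show (insert c (insert c' Δ.cells)).card = n + 3
    rw [Finset.card_insert_of_notMem h1, Finset.card_insert_of_notMem (by simpa using hc'.1)]
    have h2 : Δ.cells.card = n + 1 := hΔ
    omega
  cardS := Finset.card_pair (fun he => by rw [he] at hlt; omega)
  removable := by
    have hne : c ≠ c' := fun he => by rw [he] at hlt; omega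
    have h1 : c ∉ insert c' Δ.cells := by
      simp only [Finset.mem_insert]
      rintro (rfl | hm)
      · omega
      · exact hc.1 hm
    intro s hs
    rcases Finset.mem_insert.1 hs with rfl | hs
    · constructor
      · show s ∈ insert s (insert c' Δ.cells)
        exact Finset.mem_insert_self _ _
      · show IsLowerSet (↑((insert s (insert c' Δ.cells)).erase s) : Set (ℕ × ℕ))
        rw [Finset.erase_insert h1]
        exact (addBox Δ c' hc').isLowerSet
    · rw [Finset.mem_singleton] at hs
      subst hs
      constructor
      · show s ∈ insert c (insert s Δ.cells)
        exact Finset.mem_insert_of_mem (Finset.mem_insert_self _ _)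
      · show IsLowerSet (↑((insert c (insert s Δ.cells)).erase s) : Set (ℕ × ℕ))
        rw [Finset.erase_insert_of_ne hne, Finset.erase_insert (by simpa using hc'.1)]
        exact (addBox Δ c hc).isLowerSet

@[simp] lemma mkPair_S {n : ℕ} {Δ : YoungDiagram} {c c' : ℕ × ℕ} {hc : AddC Δ c}
    {hc' : AddC Δ c'} {hlt : c.2 < c'.2} {hΔ : Δ.card = n + 1} :
    (mkPair n Δ c c' hc hc' hlt hΔ).S = {c, c'} := rfl

lemma mkPair_Y_cells {n : ℕ} {Δ : YoungDiagram} {c c' : ℕ × ℕ} {hc : AddC Δ c}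
    {hc' : AddC Δ c'} {hlt : c.2 < c'.2} {hΔ : Δ.card = n + 1} :
    (mkPair n Δ c c' hc hc' hlt hΔ).Y.cells = insert c (insert c' Δ.cells) := rfl

lemma mkPair_ell {n : ℕ} {Δ : YoungDiagram} {c c' : ℕ × ℕ} {hc : AddC Δ c}
    {hc' : AddC Δ c'} {hlt : c.2 < c'.2} {hΔ : Δ.card = n + 1} :
    ell (mkPair n Δ c c' hc hc' hlt hΔ).Y = ell Δ + if c.2 = 0 then 1 else 0 := by
  unfold ell
  rw [show (mkPair n Δ c c' hc hc' hlt hΔ).Y.cells = insert c (insert c' Δ.cells) from rfl,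
    Finset.filter_insert, Finset.filter_insert]
  have hc'2 : ¬ c'.2 = 0 := by omega
  rw [if_neg hc'2]
  split_ifs with hc2
  · rw [Finset.card_insert_of_notMem (by simp [Finset.mem_filter, hc.1])]
  · simp

-- ===== part 4: the corners e1, e2 and the map =====
lemma rem_colLen {Δ : YoungDiagram} {v : ℕ} (h : Δ.colLen (v + 1) < Δ.colLen v) :
    Rem Δ (Δ.colLen v - 1, v) := by
  refine ⟨YoungDiagram.mem_iff_lt_colLen.2 (by omega), ?_, ?_⟩
  · show (Δ.colLen v - 1 + 1, v) ∉ Δ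
    rw [YoungDiagram.mem_iff_lt_colLen]; omega
  · show (Δ.colLen v - 1, v + 1) ∉ Δ
    rw [YoungDiagram.mem_iff_lt_colLen]; omega

lemma addC_colLen {Δ : YoungDiagram} {v : ℕ} (h : v = 0 ∨ Δ.colLen v < Δ.colLen (v - 1)) :
    AddC Δ (Δ.colLen v, v) := by
  refine ⟨by rw [YoungDiagram.mem_iff_lt_colLen]; omega, ?_, ?_⟩
  · simp only
    rcases Nat.eq_zero_or_pos (Δ.colLen v) with h0 | h0
    · exact Or.inl h0
    · exact Or.inr (YoungDiagram.mem_iff_lt_colLen.2 (by omega))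
  · simp only
    rcases h with h0 | hlt
    · exact Or.inl h0
    · exact Or.inr (YoungDiagram.mem_iff_lt_colLen.2 hlt)

/-- The addable corner just right of a removable corner in column `v₁`. -/
def e1 (Δ : YoungDiagram) (v₁ : ℕ) : ℕ × ℕ := (Δ.colLen (v₁ + 1), v₁ + 1)

/-- The addable corner `a_{j-1}` preceding the addable corner in column `v₂ ≥ 1`. -/
def e2 (Δ : YoungDiagram) (v₂ : ℕ) : ℕ × ℕ :=
  (Δ.colLen (v₂ - 1), Δ.rowLen (Δ.colLen (v₂ - 1)))

lemma e1_add {Δ : YoungDiagram} {b₁ : ℕ × ℕ} (h : Rem Δ b₁) : AddC Δ (e1 Δ b₁.2) := by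
  have h1 := h.colLen_eq
  have h2 : Δ.colLen (b₁.2 + 1) ≤ b₁.1 := by
    have := h.2.2
    rw [YoungDiagram.mem_iff_lt_colLen] at this
    omega
  exact addC_colLen (Or.inr (by simpa using by omega))

lemma e2_spec {Δ : YoungDiagram} {b₂ : ℕ × ℕ} (h₂ : AddC Δ b₂) (h1 : 1 ≤ b₂.2) :
    AddC Δ (e2 Δ b₂.2) ∧ (e2 Δ b₂.2).2 + 1 ≤ b₂.2 ∧ 1 ≤ (e2 Δ b₂.2).1 := by
  set v := b₂.2 with hv
  set h := Δ.colLen (v - 1) with hh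
  have hmem : (b₂.1, v - 1) ∈ Δ := by
    have := h₂.2.2
    rcases this with h0 | hm
    · omega
    · exact hm
  have hge : b₂.1 + 1 ≤ h := by
    rw [hh]
    have := YoungDiagram.mem_iff_lt_colLen.1 hmem
    omega
  have hrow : Δ.rowLen h ≤ v - 1 := by
    have : (h, v - 1) ∉ Δ := by rw [YoungDiagram.mem_iff_lt_colLen]; omega
    rw [YoungDiagram.mem_iff_lt_rowLen] at this
    omega
  have hrowm : v ≤ Δ.rowLen (h - 1) := by
    have : (h - 1, v - 1) ∈ Δ := by rw [YoungDiagram.mem_iff_lt_colLen]; omega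
    rw [YoungDiagram.mem_iff_lt_rowLen] at this
    omega
  refine ⟨⟨?_, ?_, ?_⟩, show Δ.rowLen h + 1 ≤ v by omega, show 1 ≤ h by omega⟩
  · rw [show e2 Δ v = (h, Δ.rowLen h) from rfl, YoungDiagram.mem_iff_lt_rowLen]
    omega
  · right
    rw [show e2 Δ v = (h, Δ.rowLen h) from rfl]
    simp only
    rw [YoungDiagram.mem_iff_lt_rowLen]
    omega
  · rw [show e2 Δ v = (h, Δ.rowLen h) from rfl]
    simp only
    rcases Nat.eq_zero_or_pos (Δ.rowLen h) with h0 | h0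
    · exact Or.inl h0
    · exact Or.inr (YoungDiagram.mem_iff_lt_rowLen.2 (by omega))

/-- The 2-to-1 map from triples to marked pairs. -/
noncomputable def bmap {n : ℕ} (T : TripleFlag n) : MarkedPair n :=
  if h0 : T.b₂.2 = 0 then
    mkPair n T.Γ₂ T.b₂ (e1 T.Γ₂ T.b₁.2) T.hAdd (e1_add T.hRem)
      (by simp [e1, h0]) T.card₂
  else if hge : T.b₁.2 + 2 ≤ T.b₂.2 then
    mkPair n T.Γ₂ (e1 T.Γ₂ T.b₁.2) T.b₂ (e1_add T.hRem) T.hAdd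
      (by simp [e1]; omega) T.card₂
  else
    mkPair n T.Γ₂ (e2 T.Γ₂ T.b₂.2) (e1 T.Γ₂ T.b₁.2)
      (e2_spec T.hAdd (by omega)).1 (e1_add T.hRem)
      (by have := (e2_spec T.hAdd (show 1 ≤ T.b₂.2 by omega)).2.1; simp [e1]; omega) T.card₂

-- ===== part 5: small auxiliary lemmas =====
lemma posInf_mkTriple {n : ℕ} {Δ : YoungDiagram} {b₁ b₂ : ℕ × ℕ} {h₁ : Rem Δ b₁}
    {h₂ : AddC Δ b₂} {hc : Δ.card = n + 1} :
    posInf (mkTriple n Δ b₁ b₂ h₁ h₂ hc)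
      = if b₁.2 + 2 ≤ b₂.2 then (n + 2) - (ell Δ + if b₂.2 = 0 then 1 else 0) + 1
        else (n + 2) - (ell Δ + if b₂.2 = 0 then 1 else 0) := by
  unfold posInf
  rw [mkTriple_b₁, mkTriple_b₂, mkTriple_Γ₃, ell_addBox]

lemma pair_eq_of_snd_lt {x y c c' : ℕ × ℕ} (h : ({x, y} : Finset (ℕ × ℕ)) = {c, c'})
    (h1 : x.2 < y.2) (h2 : c.2 < c'.2) : x = c ∧ y = c' := by
  have hx : x = c ∨ x = c' := by
    have : x ∈ ({c, c'} : Finset (ℕ × ℕ)) := h ▸ Finset.mem_insert_self x {y}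
    simpa using this
  have hy : y = c ∨ y = c' := by
    have : y ∈ ({c, c'} : Finset (ℕ × ℕ)) := h ▸ Finset.mem_insert_of_mem (Finset.mem_singleton_self y)
    simpa using this
  rcases hx with rfl | rfl
  · rcases hy with rfl | rfl
    · omega
    · exact ⟨rfl, rfl⟩
  · rcases hy with rfl | rfl
    · omega
    · omega

lemma colLen_eq_of {Γ : YoungDiagram} {j m : ℕ} (h1 : m = 0 ∨ (m - 1, j) ∈ Γ)
    (h2 : (m, j) ∉ Γ) : Γ.colLen j = m := by
  rw [YoungDiagram.mem_iff_lt_colLen] at h2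
  rcases h1 with h0 | h1
  · omega
  · rw [YoungDiagram.mem_iff_lt_colLen] at h1
    omega

lemma rowLen_eq_of {Γ : YoungDiagram} {i m : ℕ} (h1 : m = 0 ∨ (i, m - 1) ∈ Γ)
    (h2 : (i, m) ∉ Γ) : Γ.rowLen i = m := by
  rw [YoungDiagram.mem_iff_lt_rowLen] at h2
  rcases h1 with h0 | h1
  · omega
  · rw [YoungDiagram.mem_iff_lt_rowLen] at h1
    omega

-- ===== part 6: the fiber analysis =====
lemma recover_base {Y s : Finset (ℕ × ℕ)} {x y : ℕ × ℕ} (h : insert x (insert y s) = Y)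
    (hx : x ∉ insert y s) (hy : y ∉ s) : s = (Y.erase x).erase y := by
  rw [← h, Finset.erase_insert hx, Finset.erase_insert hy]

lemma bmap_mkTriple₁ {n : ℕ} {Δ : YoungDiagram} {b₁ b₂ : ℕ × ℕ} {h₁ : Rem Δ b₁}
    {h₂ : AddC Δ b₂} {hc : Δ.card = n + 1} (h0 : b₂.2 = 0) :
    bmap (mkTriple n Δ b₁ b₂ h₁ h₂ hc)
      = mkPair n Δ b₂ (e1 Δ b₁.2) h₂ (e1_add h₁) (by simp [e1]; omega) hc := by
  unfold bmap
  exact dif_pos h0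

lemma bmap_mkTriple₂ {n : ℕ} {Δ : YoungDiagram} {b₁ b₂ : ℕ × ℕ} {h₁ : Rem Δ b₁}
    {h₂ : AddC Δ b₂} {hc : Δ.card = n + 1} (h0 : ¬ b₂.2 = 0) (hge : b₁.2 + 2 ≤ b₂.2) :
    bmap (mkTriple n Δ b₁ b₂ h₁ h₂ hc)
      = mkPair n Δ (e1 Δ b₁.2) b₂ (e1_add h₁) h₂ (by simp [e1]; omega) hc := by
  unfold bmap
  exact (dif_neg h0).trans (dif_pos hge)

lemma bmap_mkTriple₃ {n : ℕ} {Δ : YoungDiagram} {b₁ b₂ : ℕ × ℕ} {h₁ : Rem Δ b₁}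
    {h₂ : AddC Δ b₂} {hc : Δ.card = n + 1} (h0 : ¬ b₂.2 = 0) (hge : ¬ (b₁.2 + 2 ≤ b₂.2)) :
    bmap (mkTriple n Δ b₁ b₂ h₁ h₂ hc)
      = mkPair n Δ (e2 Δ b₂.2) (e1 Δ b₁.2) (e2_spec h₂ (by omega)).1 (e1_add h₁)
          (by have := (e2_spec h₂ (show 1 ≤ b₂.2 by omega)).2.1; simp [e1]; omega) hc := by
  unfold bmap
  exact (dif_neg h0).trans (dif_neg hge)

lemma erase_erase_comm (s : Finset (ℕ × ℕ)) (x y : ℕ × ℕ) :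
    (s.erase x).erase y = (s.erase y).erase x := by
  ext z
  simp only [Finset.mem_erase]
  tauto

lemma fiber_exists {n : ℕ} (P : MarkedPair n) {c c' : ℕ × ℕ} (hS : P.S = {c, c'})
    (hlt : c.2 < c'.2) :
    ∃ Γ H : TripleFlag n, Γ ≠ H ∧ bmap Γ = P ∧ bmap H = P ∧
      (∀ T : TripleFlag n, bmap T = P → T = Γ ∨ T = H) ∧
      posInf Γ = (n + 2) - ell P.Y ∧ posInf H = (n + 3) - ell P.Y := by
  obtain ⟨a, b⟩ := c
  obtain ⟨a', b'⟩ := c'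
  simp only at hlt
  -- basic facts about the two removable corners of Y
  have hcmem := P.removable (a, b) (by rw [hS]; simp)
  have hc'mem := P.removable (a', b') (by rw [hS]; simp)
  have hRc : Rem P.Y (a, b) := rem_of_lowerSet hcmem.1 hcmem.2
  have hRc' : Rem P.Y (a', b') := rem_of_lowerSet hc'mem.1 hc'mem.2
  have hrow : a' < a := by
    have h1 : P.Y.colLen (b + 1) ≤ a := by
      have h : (a, b + 1) ∉ P.Y := hRc.2.2
      rw [YoungDiagram.mem_iff_lt_colLen] at h
      omega
    have h2 : P.Y.colLen b' ≤ P.Y.colLen (b + 1) := P.Y.colLen_anti _ _ (by omega)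
    have h3 := hRc'.colLen_eq
    simp only at h3
    omega
  -- the base diagram Δ
  have hY'low : IsLowerSet (↑(P.Y.cells.erase (a', b')) : Set (ℕ × ℕ)) := hRc'.lowerSet
  set Y' : YoungDiagram := ⟨P.Y.cells.erase (a', b'), hY'low⟩ with hY'
  have hmemY' : ∀ x : ℕ × ℕ, x ∈ Y' ↔ x ∈ P.Y ∧ x ≠ (a', b') := by
    intro x
    change x ∈ P.Y.cells.erase (a', b') ↔ _
    rw [Finset.mem_erase]
    exact ⟨fun h => ⟨h.2, h.1⟩, fun h => ⟨h.2, h.1⟩⟩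
  have hRY'c : Rem Y' (a, b) := by
    refine ⟨(hmemY' _).2 ⟨hRc.1, by simp; omega⟩, ?_, ?_⟩
    · intro h; exact hRc.2.1 ((hmemY' _).1 h).1
    · intro h; exact hRc.2.2 ((hmemY' _).1 h).1
  set Δ : YoungDiagram := ⟨Y'.cells.erase (a, b), hRY'c.lowerSet⟩ with hΔdef
  have hmemΔ : ∀ x : ℕ × ℕ, x ∈ Δ ↔ x ∈ P.Y ∧ x ≠ (a, b) ∧ x ≠ (a', b') := by
    intro x
    change x ∈ Y'.cells.erase (a, b) ↔ _
    rw [Finset.mem_erase]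
    constructor
    · rintro ⟨h1, h2⟩
      have := (hmemY' x).1 h2
      exact ⟨this.1, h1, this.2⟩
    · rintro ⟨h1, h2, h3⟩
      exact ⟨h2, (hmemY' x).2 ⟨h1, h3⟩⟩
  have hYins : insert (a, b) (insert (a', b') Δ.cells) = P.Y.cells := by
    ext x
    simp only [Finset.mem_insert]
    constructor
    · rintro (rfl | rfl | hx)
      · exact hRc.1
      · exact hRc'.1
      · exact (((hmemΔ x).1 hx).1 : x ∈ P.Y)
    · intro hx
      by_cases h1 : x = (a, b)
      · exact Or.inl h1
      by_cases h2 : x = (a', b')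
      · exact Or.inr (Or.inl h2)
      · exact Or.inr (Or.inr ((hmemΔ x).2 ⟨hx, h1, h2⟩))
  have hcard : Δ.card = n + 1 := by
    have h1 : (a, b) ∉ insert (a', b') Δ.cells := by
      simp only [Finset.mem_insert]
      rintro (h | h)
      · simp at h; omega
      · exact (((hmemΔ _).1 h).2.1 : _) rfl
    have h2 : (a', b') ∉ Δ.cells := fun h => (((hmemΔ _).1 h).2.2 : _) rfl
    have h3 := congrArg Finset.card hYins
    rw [Finset.card_insert_of_notMem h1, Finset.card_insert_of_notMem h2] at h3
    have h4 : P.Y.cells.card = n + 3 := P.cardY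
    show Δ.cells.card = n + 1
    omega
  -- addability of the two corners over Δ
  have hAc : AddC Δ (a, b) := by
    refine ⟨fun h => (((hmemΔ _).1 h).2.1 : _) rfl, ?_, ?_⟩
    · simp only
      rcases Nat.eq_zero_or_pos a with h0 | h0
      · exact Or.inl h0
      · refine Or.inr ((hmemΔ _).2 ⟨P.Y.up_left_mem (by omega) le_rfl hRc.1, ?_, ?_⟩)
        · intro h; rw [Prod.mk.injEq] at h; omega
        · intro h; rw [Prod.mk.injEq] at h; omega
    · simp only
      rcases Nat.eq_zero_or_pos b with h0 | h0
      · exact Or.inl h0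
      · refine Or.inr ((hmemΔ _).2 ⟨P.Y.up_left_mem le_rfl (by omega) hRc.1, ?_, ?_⟩)
        · intro h; rw [Prod.mk.injEq] at h; omega
        · intro h; rw [Prod.mk.injEq] at h; omega
  have hAc' : AddC Δ (a', b') := by
    refine ⟨fun h => (((hmemΔ _).1 h).2.2 : _) rfl, ?_, ?_⟩
    · simp only
      rcases Nat.eq_zero_or_pos a' with h0 | h0
      · exact Or.inl h0
      · refine Or.inr ((hmemΔ _).2 ⟨P.Y.up_left_mem (by omega) le_rfl hRc'.1, ?_, ?_⟩)
        · intro h; rw [Prod.mk.injEq] at h; omega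
        · intro h; rw [Prod.mk.injEq] at h; omega
    · simp only
      refine Or.inr ((hmemΔ _).2 ⟨P.Y.up_left_mem le_rfl (by omega) hRc'.1, ?_, ?_⟩)
      · intro h; rw [Prod.mk.injEq] at h; omega
      · intro h; rw [Prod.mk.injEq] at h; omega
  -- numeric facts
  have F1 : Δ.colLen b' = a' := hAc'.fst_eq.symm
  have F2 : Δ.colLen b = a := hAc.fst_eq.symm
  have F3 : Δ.rowLen a = b := hAc.snd_eq.symm
  have F4 : Δ.rowLen a' = b' := hAc'.snd_eq.symm
  have F6 : (a', b' - 1) ∈ Δ := by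
    refine (hmemΔ _).2 ⟨P.Y.up_left_mem le_rfl (by omega) hRc'.1, ?_, ?_⟩
    · intro h; rw [Prod.mk.injEq] at h; omega
    · intro h; rw [Prod.mk.injEq] at h; omega
  have F7 : a' + 1 ≤ Δ.colLen (b' - 1) := by
    have := YoungDiagram.mem_iff_lt_colLen.1 F6; omega
  have hb1c : Rem Δ (Δ.colLen (b' - 1) - 1, b' - 1) := by
    apply rem_colLen
    rw [show b' - 1 + 1 = b' by omega]
    omega
  have F9 : (a - 1, b) ∈ Δ := by
    refine (hmemΔ _).2 ⟨P.Y.up_left_mem (by omega) le_rfl hRc.1, ?_, ?_⟩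
    · intro h; rw [Prod.mk.injEq] at h; omega
    · intro h; rw [Prod.mk.injEq] at h; omega
  have F9' : b + 1 ≤ Δ.rowLen (a - 1) := by
    have := YoungDiagram.mem_iff_lt_rowLen.1 F9; omega
  have F10 : Δ.rowLen (a - 1) ≤ b' := by
    have h1 : (a - 1, b') ∉ Δ := by
      intro h
      have := YoungDiagram.mem_iff_lt_colLen.1 h
      omega
    rw [YoungDiagram.mem_iff_lt_rowLen] at h1
    omega
  have F11 : Δ.colLen (Δ.rowLen (a - 1) - 1) = a := by
    apply colLen_eq_of
    · refine Or.inr (YoungDiagram.mem_iff_lt_rowLen.2 ?_)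
      omega
    · rw [YoungDiagram.mem_iff_lt_rowLen]
      omega
  have F12 : Δ.colLen (Δ.rowLen (a - 1)) ≤ a - 1 := by
    have h1 : (a - 1, Δ.rowLen (a - 1)) ∉ Δ := by
      rw [YoungDiagram.mem_iff_lt_rowLen]; omega
    rw [YoungDiagram.mem_iff_lt_colLen] at h1
    omega
  have hb2n : AddC Δ (Δ.colLen (Δ.rowLen (a - 1)), Δ.rowLen (a - 1)) :=
    addC_colLen (Or.inr (by rw [F11]; omega))
  -- evaluation of e1 and e2
  have hE1 : e1 Δ (b' - 1) = (a', b') := by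
    unfold e1
    rw [show b' - 1 + 1 = b' by omega, F1]
  have hE2 : e2 Δ (Δ.rowLen (a - 1)) = (a, b) := by
    unfold e2
    rw [F11, F3]
  have hellY : ell P.Y = ell Δ + if b = 0 then 1 else 0 := by
    unfold ell
    rw [← hYins, Finset.filter_insert, Finset.filter_insert]
    rw [if_neg (show ¬ ((a', b') : ℕ × ℕ).2 = 0 by simp; omega)]
    split_ifs with hb0
    · rw [Finset.card_insert_of_notMem]
      simp only [Finset.mem_filter]
      rintro ⟨h, -⟩
      exact (((hmemΔ _).1 h).2.1 : _) rfl
    · rfl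
  -- generic way to conclude `mkPair … = P`
  have hmk : ∀ (x y : ℕ × ℕ) (hx : AddC Δ x) (hy : AddC Δ y) (hl : x.2 < y.2),
      x = (a, b) → y = (a', b') → mkPair n Δ x y hx hy hl hcard = P := by
    rintro x y hx hy hl rfl rfl
    refine MarkedPair.ext' (YoungDiagram.ext ?_) ?_
    · rw [mkPair_Y_cells]; exact hYins
    · rw [mkPair_S, hS]
  -- the three candidate triples and their images
  have hbTn : bmap (mkTriple n Δ (Δ.colLen (b' - 1) - 1, b' - 1)
      (Δ.colLen (Δ.rowLen (a - 1)), Δ.rowLen (a - 1)) hb1c hb2n hcard) = P := by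
    rw [bmap_mkTriple₃ (show ¬ (Δ.colLen (Δ.rowLen (a - 1)), Δ.rowLen (a - 1)).2 = 0 by
        show ¬ Δ.rowLen (a - 1) = 0; omega)
      (show ¬ ((Δ.colLen (b' - 1) - 1, b' - 1).2 + 2 ≤ (Δ.colLen (Δ.rowLen (a - 1)),
        Δ.rowLen (a - 1)).2) by show ¬ (b' - 1 + 2 ≤ Δ.rowLen (a - 1)); omega)]
    exact hmk _ _ _ _ _ hE2 hE1
  have hposTn : posInf (mkTriple n Δ (Δ.colLen (b' - 1) - 1, b' - 1)
      (Δ.colLen (Δ.rowLen (a - 1)), Δ.rowLen (a - 1)) hb1c hb2n hcard) = (n + 2) - ell Δ := by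
    rw [posInf_mkTriple]
    rw [if_neg (show ¬ ((Δ.colLen (b' - 1) - 1, b' - 1).2 + 2 ≤ (Δ.colLen (Δ.rowLen (a - 1)),
        Δ.rowLen (a - 1)).2) by show ¬ (b' - 1 + 2 ≤ Δ.rowLen (a - 1)); omega)]
    rw [if_neg (show ¬ (Δ.colLen (Δ.rowLen (a - 1)), Δ.rowLen (a - 1)).2 = 0 by
        show ¬ Δ.rowLen (a - 1) = 0; omega)]
    simp
  -- uniqueness of preimages
  have huniq : ∀ T : TripleFlag n, bmap T = P → T.Γ₂ = Δ ∧
      ((b = 0 ∧ T.b₁ = (Δ.colLen (b' - 1) - 1, b' - 1) ∧ T.b₂ = (a, b)) ∨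
       (T.b₁ = (Δ.colLen (b' - 1) - 1, b' - 1) ∧
         T.b₂ = (Δ.colLen (Δ.rowLen (a - 1)), Δ.rowLen (a - 1))) ∨
       (1 ≤ b ∧ T.b₁ = (Δ.colLen (b - 1) - 1, b - 1) ∧ T.b₂ = (a', b'))) := by
    intro T hT
    have hRemT := T.hRem
    have hAddT := T.hAdd
    unfold bmap at hT
    split_ifs at hT with h0 hge
    · -- branch 1 : T.b₂.2 = 0
      have hSeq : ({T.b₂, e1 T.Γ₂ T.b₁.2} : Finset (ℕ × ℕ)) = {(a, b), (a', b')} := by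
        have h := congrArg MarkedPair.S hT
        change ({T.b₂, e1 T.Γ₂ T.b₁.2} : Finset (ℕ × ℕ)) = P.S at h
        rw [h, hS]
      obtain ⟨hx, hy⟩ := pair_eq_of_snd_lt hSeq
        (show T.b₂.2 < T.b₁.2 + 1 by omega) (show b < b' from hlt)
      have hYeq : insert T.b₂ (insert (e1 T.Γ₂ T.b₁.2) T.Γ₂.cells) = P.Y.cells := by
        have h := congrArg (fun Q : MarkedPair n => Q.Y.cells) hT
        exact h
      have hnm1 : T.b₂ ∉ insert (e1 T.Γ₂ T.b₁.2) T.Γ₂.cells := by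
        simp only [Finset.mem_insert]
        rintro (h | h)
        · have := congrArg Prod.snd h
          simp only [e1] at this
          omega
        · exact hAddT.1 h
      have hG2 : T.Γ₂ = Δ := by
        apply YoungDiagram.ext
        rw [recover_base hYeq hnm1 (by simpa using (e1_add hRemT).1), hx, hy]
        exact erase_erase_comm _ _ _
      have hb12 : T.b₁.2 = b' - 1 := by
        have := congrArg Prod.snd hy
        simp only [e1] at this
        omega
      have hb1 : T.b₁ = (Δ.colLen (b' - 1) - 1, b' - 1) := by
        have hR : Rem Δ T.b₁ := hG2 ▸ hRemT
        have hcl := hR.colLen_eq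
        rw [hb12] at hcl
        rw [Prod.ext_iff]
        refine ⟨?_, hb12⟩
        simp only
        omega
      refine ⟨hG2, Or.inl ⟨?_, hb1, hx⟩⟩
      have := congrArg Prod.snd hx
      simp only at this
      omega
    · -- branch 2 : T.b₁.2 + 2 ≤ T.b₂.2
      have hSeq : ({e1 T.Γ₂ T.b₁.2, T.b₂} : Finset (ℕ × ℕ)) = {(a, b), (a', b')} := by
        have h := congrArg MarkedPair.S hT
        change ({e1 T.Γ₂ T.b₁.2, T.b₂} : Finset (ℕ × ℕ)) = P.S at h
        rw [h, hS]
      obtain ⟨hx, hy⟩ := pair_eq_of_snd_lt hSeq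
        (show T.b₁.2 + 1 < T.b₂.2 by omega) (show b < b' from hlt)
      have hYeq : insert (e1 T.Γ₂ T.b₁.2) (insert T.b₂ T.Γ₂.cells) = P.Y.cells := by
        have h := congrArg (fun Q : MarkedPair n => Q.Y.cells) hT
        exact h
      have hnm1 : e1 T.Γ₂ T.b₁.2 ∉ insert T.b₂ T.Γ₂.cells := by
        simp only [Finset.mem_insert]
        rintro (h | h)
        · have := congrArg Prod.snd h
          simp only [e1] at this
          omega
        · exact (e1_add hRemT).1 h
      have hG2 : T.Γ₂ = Δ := by
        apply YoungDiagram.ext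
        rw [recover_base hYeq hnm1 (by simpa using hAddT.1), hx, hy]
        exact erase_erase_comm _ _ _
      have hb12 : T.b₁.2 = b - 1 := by
        have := congrArg Prod.snd hx
        simp only [e1] at this
        omega
      have hbpos : 1 ≤ b := by
        have := congrArg Prod.snd hx
        simp only [e1] at this
        omega
      have hb1 : T.b₁ = (Δ.colLen (b - 1) - 1, b - 1) := by
        have hR : Rem Δ T.b₁ := hG2 ▸ hRemT
        have hcl := hR.colLen_eq
        rw [hb12] at hcl
        rw [Prod.ext_iff]
        refine ⟨?_, hb12⟩
        simp only
        omega
      exact ⟨hG2, Or.inr (Or.inr ⟨hbpos, hb1, hy⟩)⟩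
    · -- branch 3 : T.b₂.2 ≥ 1, T.b₂.2 ≤ T.b₁.2 + 1
      have hsp := e2_spec hAddT (show 1 ≤ T.b₂.2 by omega)
      have hSeq : ({e2 T.Γ₂ T.b₂.2, e1 T.Γ₂ T.b₁.2} : Finset (ℕ × ℕ)) = {(a, b), (a', b')} := by
        have h := congrArg MarkedPair.S hT
        change ({e2 T.Γ₂ T.b₂.2, e1 T.Γ₂ T.b₁.2} : Finset (ℕ × ℕ)) = P.S at h
        rw [h, hS]
      obtain ⟨hx, hy⟩ := pair_eq_of_snd_lt hSeq
        (show (e2 T.Γ₂ T.b₂.2).2 < T.b₁.2 + 1 by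
          have := hsp.2.1
          omega) (show b < b' from hlt)
      have hYeq : insert (e2 T.Γ₂ T.b₂.2) (insert (e1 T.Γ₂ T.b₁.2) T.Γ₂.cells)
          = P.Y.cells := by
        have h := congrArg (fun Q : MarkedPair n => Q.Y.cells) hT
        exact h
      have hnm1 : e2 T.Γ₂ T.b₂.2 ∉ insert (e1 T.Γ₂ T.b₁.2) T.Γ₂.cells := by
        simp only [Finset.mem_insert]
        rintro (h | h)
        · have := congrArg Prod.snd h
          simp only [e1] at this
          have := hsp.2.1
          omega
        · exact hsp.1.1 h
      have hG2 : T.Γ₂ = Δ := by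
        apply YoungDiagram.ext
        rw [recover_base hYeq hnm1 (by simpa using (e1_add hRemT).1), hx, hy]
        exact erase_erase_comm _ _ _
      have hb12 : T.b₁.2 = b' - 1 := by
        have := congrArg Prod.snd hy
        simp only [e1] at this
        omega
      have hb1 : T.b₁ = (Δ.colLen (b' - 1) - 1, b' - 1) := by
        have hR : Rem Δ T.b₁ := hG2 ▸ hRemT
        have hcl := hR.colLen_eq
        rw [hb12] at hcl
        rw [Prod.ext_iff]
        refine ⟨?_, hb12⟩
        simp only
        omega
      -- pin down T.b₂
      have hA : AddC Δ T.b₂ := hG2 ▸ hAddT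
      have hxΔ : e2 Δ T.b₂.2 = (a, b) := hG2 ▸ hx
      have s3 : Δ.colLen (T.b₂.2 - 1) = a := congrArg Prod.fst hxΔ
      have sb : Δ.rowLen (Δ.colLen (T.b₂.2 - 1)) = b := congrArg Prod.snd hxΔ
      have s1 : T.b₂.1 = Δ.colLen T.b₂.2 := hA.fst_eq
      have s2 : (T.b₂.1, T.b₂.2 - 1) ∈ Δ := by
        rcases hA.2.2 with h' | h'
        · omega
        · exact h'
      have s3' : T.b₂.1 + 1 ≤ a := by
        have := YoungDiagram.mem_iff_lt_colLen.1 s2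
        omega
      have s4 : (a - 1, T.b₂.2) ∉ Δ := by
        intro hmem
        have := YoungDiagram.mem_iff_lt_colLen.1 hmem
        omega
      have s5 : Δ.rowLen (a - 1) = T.b₂.2 := by
        apply rowLen_eq_of
        · refine Or.inr (YoungDiagram.mem_iff_lt_colLen.2 ?_)
          rw [s3]
          omega
        · exact s4
      have hb2 : T.b₂ = (Δ.colLen (Δ.rowLen (a - 1)), Δ.rowLen (a - 1)) := by
        rw [Prod.ext_iff, s5]
        exact ⟨by rw [s1], rfl⟩
      exact ⟨hG2, Or.inr (Or.inl ⟨hb1, hb2⟩)⟩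
  -- now split according to whether b = 0
  rcases Nat.eq_zero_or_pos b with hb0 | hb0
  · subst hb0
    refine ⟨mkTriple n Δ (Δ.colLen (b' - 1) - 1, b' - 1) (a, 0) hb1c hAc hcard,
      mkTriple n Δ (Δ.colLen (b' - 1) - 1, b' - 1)
        (Δ.colLen (Δ.rowLen (a - 1)), Δ.rowLen (a - 1)) hb1c hb2n hcard, ?_, ?_, ?_, ?_, ?_, ?_⟩
    · intro h
      have := congrArg (fun T : TripleFlag n => T.b₂.2) h
      simp only [mkTriple_b₂] at this
      omega
    · rw [bmap_mkTriple₁ (show ((a, 0) : ℕ × ℕ).2 = 0 from rfl)]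
      exact hmk _ _ _ _ _ rfl hE1
    · exact hbTn
    · intro T hT
      obtain ⟨hG2, hcase⟩ := huniq T hT
      rcases hcase with ⟨-, h1, h2⟩ | ⟨h1, h2⟩ | ⟨hb1, -, -⟩
      · exact Or.inl (TripleFlag.ext' (by rw [hG2]; rfl) (by rw [h1]; rfl) (by rw [h2]; rfl))
      · exact Or.inr (TripleFlag.ext' (by rw [hG2]; rfl) (by rw [h1]; rfl) (by rw [h2]; rfl))
      · omega
    · rw [posInf_mkTriple]
      rw [if_neg (show ¬ ((Δ.colLen (b' - 1) - 1, b' - 1).2 + 2 ≤ ((a, 0) : ℕ × ℕ).2) by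
          show ¬ (b' - 1 + 2 ≤ 0); omega)]
      rw [if_pos (show ((a, 0) : ℕ × ℕ).2 = 0 from rfl), hellY]
      simp
    · rw [hposTn, hellY]
      norm_num
      omega
  · refine ⟨mkTriple n Δ (Δ.colLen (b' - 1) - 1, b' - 1)
        (Δ.colLen (Δ.rowLen (a - 1)), Δ.rowLen (a - 1)) hb1c hb2n hcard,
      mkTriple n Δ (Δ.colLen (b - 1) - 1, b - 1) (a', b')
        (rem_colLen (show Δ.colLen (b - 1 + 1) < Δ.colLen (b - 1) by
          rw [show b - 1 + 1 = b by omega, F2]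
          have : (a, b - 1) ∈ Δ := by
            refine (hmemΔ _).2 ⟨P.Y.up_left_mem le_rfl (by omega) hRc.1, ?_, ?_⟩
            · intro h; rw [Prod.mk.injEq] at h; omega
            · intro h; rw [Prod.mk.injEq] at h; omega
          have := YoungDiagram.mem_iff_lt_colLen.1 this
          omega)) hAc' hcard, ?_, ?_, ?_, ?_, ?_, ?_⟩
    · intro h
      have := congrArg (fun T : TripleFlag n => T.b₁.2) h
      simp only [mkTriple_b₁] at this
      omega
    · exact hbTn
    · rw [bmap_mkTriple₂ (show ¬ ((a', b') : ℕ × ℕ).2 = 0 by show ¬ b' = 0; omega)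
        (show (Δ.colLen (b - 1) - 1, b - 1).2 + 2 ≤ ((a', b') : ℕ × ℕ).2 by
          show b - 1 + 2 ≤ b'; omega)]
      refine hmk _ _ _ _ _ ?_ rfl
      unfold e1
      rw [show b - 1 + 1 = b by omega, F2]
    · intro T hT
      obtain ⟨hG2, hcase⟩ := huniq T hT
      rcases hcase with ⟨hb0', -, -⟩ | ⟨h1, h2⟩ | ⟨-, h1, h2⟩
      · omega
      · exact Or.inl (TripleFlag.ext' (by rw [hG2]; rfl) (by rw [h1]; rfl) (by rw [h2]; rfl))
      · exact Or.inr (TripleFlag.ext' (by rw [hG2]; rfl) (by rw [h1]; rfl) (by rw [h2]; rfl))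
    · rw [hposTn, hellY]
      rw [if_neg (by omega)]
      omega
    · rw [posInf_mkTriple]
      rw [if_pos (show (Δ.colLen (b - 1) - 1, b - 1).2 + 2 ≤ ((a', b') : ℕ × ℕ).2 by
          show b - 1 + 2 ≤ b'; omega)]
      rw [if_neg (show ¬ ((a', b') : ℕ × ℕ).2 = 0 by show ¬ b' = 0; omega), hellY]
      rw [if_neg (by omega)]
      have h1 : ell Δ ≤ n + 1 := le_trans (ell_le_card Δ) (le_of_eq hcard)
      omega

-- ===== part 7: finiteness =====
lemma yd_finite (N : ℕ) : {Γ : YoungDiagram | Γ.card ≤ N}.Finite := by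
  have h1 : {Γ : YoungDiagram | Γ.card ≤ N} ⊆
      YoungDiagram.cells ⁻¹' ↑((Finset.range N ×ˢ Finset.range N).powerset) := by
    intro Γ hΓ
    simp only [Set.mem_setOf_eq] at hΓ
    have hsub : Γ.cells ⊆ Finset.range N ×ˢ Finset.range N := by
      intro c hc
      have := mem_lt_card (Γ := Γ) (c := c) hc
      simp only [Finset.mem_product, Finset.mem_range]
      constructor <;> omega
    show Γ.cells ∈ (Finset.range N ×ˢ Finset.range N).powerset
    exact Finset.mem_powerset.2 hsub
  refine Set.Finite.subset (Set.Finite.preimage ?_ (Finset.finite_toSet _)) h1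
  intro x _ y _ h
  exact YoungDiagram.ext h

lemma tripleFlag_finite (n : ℕ) : Finite (TripleFlag n) := by
  rw [← Set.finite_univ_iff]
  set f : TripleFlag n → YoungDiagram × (ℕ × ℕ) × (ℕ × ℕ) := fun T => (T.Γ₂, T.b₁, T.b₂)
    with hf
  have hinj : Function.Injective f := by
    intro T T' h
    rw [Prod.ext_iff, Prod.ext_iff] at h
    exact TripleFlag.ext' h.1 h.2.1 h.2.2
  set R : Finset (ℕ × ℕ) := Finset.range (n + 3) ×ˢ Finset.range (n + 3) with hR
  have hS : ({Γ : YoungDiagram | Γ.card ≤ n + 3} ×ˢ ((↑R : Set (ℕ × ℕ)) ×ˢ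
      (↑R : Set (ℕ × ℕ)))).Finite :=
    (yd_finite (n + 3)).prod ((R.finite_toSet).prod (R.finite_toSet))
  refine Set.Finite.subset (hS.preimage hinj.injOn) ?_
  intro T _
  simp only [Set.mem_preimage, Set.mem_prod, Set.mem_setOf_eq, Finset.mem_coe, hf, hR]
  have h1 : T.b₁ ∈ T.Γ₂ := T.mem₁
  have h2 : T.b₂ ∈ T.Γ₃ := by
    rw [← YoungDiagram.mem_cells, T.cells₃]
    exact Finset.mem_insert_self _ _
  have hb1 := mem_lt_card h1
  have hb2 := mem_lt_card h2
  have hc2 := T.card₂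
  have hc3 := T.card₃
  refine ⟨by omega, ?_, ?_⟩ <;> simp only [Finset.mem_product, Finset.mem_range] <;>
    constructor <;> omega

lemma markedPair_finite (n : ℕ) : Finite (MarkedPair n) := by
  rw [← Set.finite_univ_iff]
  set f : MarkedPair n → YoungDiagram × Finset (ℕ × ℕ) := fun P => (P.Y, P.S) with hf
  have hinj : Function.Injective f := by
    intro P P' h
    rw [Prod.ext_iff] at h
    exact MarkedPair.ext' h.1 h.2
  set R : Finset (ℕ × ℕ) := Finset.range (n + 3) ×ˢ Finset.range (n + 3) with hR
  have hS : ({Γ : YoungDiagram | Γ.card ≤ n + 3} ×ˢ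
      (↑(R.powerset) : Set (Finset (ℕ × ℕ)))).Finite :=
    (yd_finite (n + 3)).prod (Finset.finite_toSet _)
  refine Set.Finite.subset (hS.preimage hinj.injOn) ?_
  intro P _
  simp only [Set.mem_preimage, Set.mem_prod, Set.mem_setOf_eq, Finset.mem_coe,
    Finset.mem_powerset, hf, hR]
  refine ⟨le_of_eq P.cardY, ?_⟩
  intro c hc
  have hmem := (P.removable c hc).1
  have := mem_lt_card hmem
  have hcY : P.Y.card = n + 3 := P.cardY
  simp only [Finset.mem_product, Finset.mem_range]
  constructor <;> omega

lemma ellY_le {n : ℕ} (P : MarkedPair n) : ell P.Y ≤ n + 2 := by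
  obtain ⟨c, c', hne, hS⟩ := Finset.card_eq_two.1 P.cardS
  have hRc : Rem P.Y c :=
    rem_of_lowerSet (P.removable c (by rw [hS]; simp)).1 (P.removable c (by rw [hS]; simp)).2
  have hRc' : Rem P.Y c' :=
    rem_of_lowerSet (P.removable c' (by rw [hS]; simp)).1 (P.removable c' (by rw [hS]; simp)).2
  have hcol : c.2 ≠ c'.2 := by
    intro h
    apply hne
    have e1 := hRc.colLen_eq
    have e2 := hRc'.colLen_eq
    rw [h] at e1
    rw [Prod.ext_iff]
    exact ⟨by omega, h⟩
  have hex : (0, 1) ∈ P.Y := by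
    rcases Nat.lt_or_ge 0 c.2 with h | h
    · exact P.Y.up_left_mem (Nat.zero_le _) (by omega) hRc.1
    · rcases Nat.lt_or_ge 0 c'.2 with h' | h'
      · exact P.Y.up_left_mem (Nat.zero_le _) (by omega) hRc'.1
      · omega
  have hsub : P.Y.cells.filter (fun c => c.2 = 0) ⊆ P.Y.cells.erase (0, 1) := by
    intro x hx
    rw [Finset.mem_filter] at hx
    rw [Finset.mem_erase]
    refine ⟨?_, hx.1⟩
    intro h
    rw [h] at hx
    simp at hx
  have h1 : (P.Y.cells.filter (fun c => c.2 = 0)).card ≤ (P.Y.cells.erase (0, 1)).card :=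
    Finset.card_le_card hsub
  rw [Finset.card_erase_of_mem hex] at h1
  have h2 : P.Y.cells.card = n + 3 := P.cardY
  show (P.Y.cells.filter (fun c => c.2 = 0)).card ≤ n + 2
  omega

/-- There is a 2-to-1 map `b` from triples to marked pairs such that the two elements
`Γ, H` of the fiber over `(Y,S)` satisfy `pos_∞(Γ) = (n+2)−ℓ(Y)` and
`pos_∞(H) = (n+3)−ℓ(Y)`; consequently
`Σ_Γ q^{pos_∞(Γ)} = (1+q)·Σ_{(Y,S)} q^{(n+2)−ℓ(Y)}`. -/
theorem statement5 (n : ℕ) :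
    ∃ b : TripleFlag n → MarkedPair n,
      (∀ P : MarkedPair n, ∃ Γ H : TripleFlag n, Γ ≠ H ∧ b Γ = P ∧ b H = P ∧
          (∀ T : TripleFlag n, b T = P → T = Γ ∨ T = H) ∧
          posInf Γ = (n + 2) - ell P.Y ∧ posInf H = (n + 3) - ell P.Y) ∧
      (∑ᶠ T : TripleFlag n, (X : Polynomial ℤ) ^ posInf T)
        = (1 + X) * ∑ᶠ P : MarkedPair n, (X : Polynomial ℤ) ^ ((n + 2) - ell P.Y) := by
  have hfib : ∀ P : MarkedPair n, ∃ Γ H : TripleFlag n, Γ ≠ H ∧ bmap Γ = P ∧ bmap H = P ∧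
      (∀ T : TripleFlag n, bmap T = P → T = Γ ∨ T = H) ∧
      posInf Γ = (n + 2) - ell P.Y ∧ posInf H = (n + 3) - ell P.Y := by
    intro P
    obtain ⟨c, c', hne, hS⟩ := Finset.card_eq_two.1 P.cardS
    have hRc : Rem P.Y c := rem_of_lowerSet (P.removable c (by rw [hS]; simp)).1
      (P.removable c (by rw [hS]; simp)).2
    have hRc' : Rem P.Y c' := rem_of_lowerSet (P.removable c' (by rw [hS]; simp)).1
      (P.removable c' (by rw [hS]; simp)).2
    have hcol : c.2 ≠ c'.2 := by
      intro h
      apply hne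
      have e1 := hRc.colLen_eq
      have e2 := hRc'.colLen_eq
      rw [h] at e1
      rw [Prod.ext_iff]
      exact ⟨by omega, h⟩
    rcases lt_or_gt_of_ne hcol with hlt | hlt
    · exact fiber_exists P hS hlt
    · exact fiber_exists P (by rw [hS]; exact Finset.pair_comm c c') hlt
  refine ⟨bmap, hfib, ?_⟩
  haveI := tripleFlag_finite n
  haveI := markedPair_finite n
  letI : Fintype (TripleFlag n) := Fintype.ofFinite _
  letI : Fintype (MarkedPair n) := Fintype.ofFinite _
  letI : DecidableEq (MarkedPair n) := Classical.decEq _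
  letI : DecidableEq (TripleFlag n) := Classical.decEq _
  rw [finsum_eq_sum_of_fintype, finsum_eq_sum_of_fintype]
  rw [← Finset.sum_fiberwise_of_maps_to (g := bmap) (fun T _ => Finset.mem_univ (bmap T))
    (fun T => (X : Polynomial ℤ) ^ posInf T)]
  rw [Finset.mul_sum]
  refine Finset.sum_congr rfl ?_
  intro P _
  obtain ⟨Γ, H, hne, hbΓ, hbH, huniq, hpΓ, hpH⟩ := hfib P
  have hfilter : Finset.univ.filter (fun T => bmap T = P) = {Γ, H} := by
    ext T
    simp only [Finset.mem_filter, Finset.mem_univ, true_and, Finset.mem_insert,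
      Finset.mem_singleton]
    constructor
    · exact huniq T
    · rintro (rfl | rfl)
      · exact hbΓ
      · exact hbH
  rw [hfilter, Finset.sum_pair hne, hpΓ, hpH]
  have hle := ellY_le P
  have h3 : n + 3 - ell P.Y = (n + 2 - ell P.Y) + 1 := by omega
  rw [h3, pow_succ]
  ring
end

section
/- Let Γ be a Young diagram with n boxes and let I_Γ ⊆ R = ℂ[x,y] be the associated monomial ideal. Then the ℂ-vector space Hom_R(I_Γ, R/I_Γ) of R-module homomorphisms has dimension exactly 2n. -/
/-!
Statement 9: for the monomial ideal I_Γ of ℂ[x,y] associated with a Young diagram Γ with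
n boxes, the ℂ-vector space Hom_R(I_Γ, R/I_Γ) has dimension exactly 2n.
-/

set_option synthInstance.maxHeartbeats 1000000
set_option maxHeartbeats 1000000

noncomputable section

open MvPolynomial

/-- `R = ℂ[x,y]`. -/
abbrev Rxy : Type := MvPolynomial (Fin 2) ℂ

/-- The monomial ideal of `R = ℂ[x,y]` associated with a Young diagram `Γ`: the ideal
generated by the monomials `x^u y^v` with `(u,v) ∉ Γ`. -/
def monomialIdeal (Γ : YoungDiagram) : Ideal Rxy :=
  Ideal.span {m : Rxy | ∃ u v : ℕ, (u, v) ∉ Γ ∧ m = X 0 ^ u * X 1 ^ v}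


namespace S9

open YoungDiagram

/-- quadruples: (source cell, target cell) -/
abbrev Z4 := (ℕ × ℕ) × (ℕ × ℕ)

def xsh (z : Z4) : Z4 := ((z.1.1+1, z.1.2), (z.2.1+1, z.2.2))
def ysh (z : Z4) : Z4 := ((z.1.1, z.1.2+1), (z.2.1, z.2.2+1))

variable (Γ : YoungDiagram)

def Step (z w : Z4) : Prop :=
  z.1 ∉ Γ ∧ w.2 ∈ Γ ∧ (w = xsh z ∨ w = ysh z)

def Equi : Z4 → Z4 → Prop := Relation.EqvGen (Step Γ)

def InA (z : Z4) : Prop := z.1 ∉ Γ ∧ z.2 ∈ Γ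

def Bad (z : Z4) : Prop :=
  (z.2.1 = 0 ∧ 1 ≤ z.1.1 ∧ (z.1.1 - 1, z.1.2) ∉ Γ) ∨
  (z.2.2 = 0 ∧ 1 ≤ z.1.2 ∧ (z.1.1, z.1.2 - 1) ∉ Γ)

def Ftt (p q : ℕ) : Z4 := ((Γ.colLen q, q), (p, Γ.rowLen p - 1))
def Fff (p q : ℕ) : Z4 := ((p, Γ.rowLen p), (Γ.colLen q - 1, q))

def FF (c : ℕ × ℕ) : Bool → Z4
  | true => Ftt Γ c.1 c.2
  | false => Fff Γ c.1 c.2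

/-! ### basic facts -/

variable {Γ}

lemma not_mem_up {u v u' v' : ℕ} (h : (u, v) ∉ Γ) (hu : u ≤ u') (hv : v ≤ v') :
    (u', v') ∉ Γ := fun hm => h (Γ.up_left_mem hu hv hm)

lemma mem_down {u v u' v' : ℕ} (h : (u, v) ∈ Γ) (hu : u' ≤ u) (hv : v' ≤ v) :
    (u', v') ∈ Γ := Γ.up_left_mem hu hv h

lemma equi_refl (z : Z4) : Equi Γ z z := Relation.EqvGen.refl z
lemma equi_symm {z w : Z4} (h : Equi Γ z w) : Equi Γ w z := Relation.EqvGen.symm _ _ h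
lemma equi_trans {z w x : Z4} (h : Equi Γ z w) (h' : Equi Γ w x) : Equi Γ z x :=
  Relation.EqvGen.trans _ _ _ h h'
lemma equi_step {z w : Z4} (h : Step Γ z w) : Equi Γ z w := Relation.EqvGen.rel _ _ h

lemma Step.inA_left {z w : Z4} (h : Step Γ z w) : InA Γ z := by
  obtain ⟨h1, h2, h3 | h3⟩ := h <;> subst h3 <;>
    exact ⟨h1, mem_down h2 (by simp [xsh, ysh]) (by simp [xsh, ysh])⟩

lemma Step.inA_right {z w : Z4} (h : Step Γ z w) : InA Γ w := by
  obtain ⟨h1, h2, h3 | h3⟩ := h <;> subst h3 <;>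
    exact ⟨not_mem_up h1 (by simp [xsh, ysh]) (by simp [xsh, ysh]), h2⟩

lemma equi_cases {z w : Z4} (h : Equi Γ z w) : z = w ∨ (InA Γ z ∧ InA Γ w) := by
  induction h with
  | rel x y hxy => exact Or.inr ⟨hxy.inA_left, hxy.inA_right⟩
  | refl x => exact Or.inl rfl
  | symm x y _ ih => tauto
  | trans x y z _ _ ih1 ih2 =>
      rcases ih1 with rfl | ⟨ha, hb⟩
      · exact ih2
      · rcases ih2 with rfl | ⟨hc, hd⟩
        · exact Or.inr ⟨ha, hb⟩
        · exact Or.inr ⟨ha, hd⟩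

/-! ### invariants -/

def dd (z : Z4) : ℤ × ℤ := ((z.2.1 : ℤ) - z.1.1, (z.2.2 : ℤ) - z.1.2)

lemma Step.dd_eq {z w : Z4} (h : Step Γ z w) : dd z = dd w := by
  obtain ⟨_, _, h3 | h3⟩ := h <;> subst h3 <;>
    simp only [dd, xsh, ysh, Prod.ext_iff] <;> push_cast <;> constructor <;> simp

lemma equi_dd {z w : Z4} (h : Equi Γ z w) : dd z = dd w := by
  induction h with
  | rel x y hxy => exact hxy.dd_eq
  | refl x => rfl
  | symm _ _ _ ih => exact ih.symm
  | trans _ _ _ _ _ ih1 ih2 => exact ih1.trans ih2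

variable (Γ) in
/-- membership in `S_d` : sources whose `d`-translate is in `Γ`. -/
def inS (d : ℤ × ℤ) (s : ℕ × ℕ) : Prop := ∃ t : ℕ × ℕ, InA Γ ((s, t) : Z4) ∧ dd (s, t) = d

variable (Γ) in
def linked (d : ℤ × ℤ) (v : ℕ) : Prop := ∃ u : ℕ, inS Γ d (u, v) ∧ inS Γ d (u, v+1)

open Classical in
variable (Γ) in
/-- number of "breaks" strictly below the source row. -/
def iot (z : Z4) : ℕ := ((Finset.range z.1.2).filter (fun v => ¬ linked Γ (dd z) v)).card

lemma Step.iot_eq {z w : Z4} (h : Step Γ z w) : iot Γ z = iot Γ w := by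
  classical
  obtain ⟨h1, h2, h3 | h3⟩ := h
  · have : w.1.2 = z.1.2 := by subst h3; rfl
    rw [iot, iot, this, (Step.dd_eq ⟨h1, h2, Or.inl h3⟩ : dd z = dd w)]
  · have hdd : dd z = dd w := Step.dd_eq ⟨h1, h2, Or.inr h3⟩
    have hl : linked Γ (dd z) z.1.2 := by
      refine ⟨z.1.1, ⟨z.2, ⟨h1, ?_⟩, rfl⟩, ⟨w.2, ⟨?_, h2⟩, ?_⟩⟩
      · subst h3; exact mem_down h2 (by simp [ysh]) (by simp [ysh])
      · exact not_mem_up h1 le_rfl (Nat.le_succ _)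
      · subst h3
        simp only [dd, ysh, Prod.ext_iff]
        push_cast; constructor <;> simp
    rw [iot, iot, ← hdd]
    have hw2 : w.1.2 = z.1.2 + 1 := by subst h3; rfl
    rw [hw2, Finset.range_add_one, Finset.filter_insert, if_neg (by simpa using hl)]

lemma equi_iot {z w : Z4} (h : Equi Γ z w) : iot Γ z = iot Γ w := by
  induction h with
  | rel x y hxy => exact hxy.iot_eq
  | refl x => rfl
  | symm _ _ _ ih => exact ih.symm
  | trans _ _ _ _ _ ih1 ih2 => exact ih1.trans ih2

end S9

namespace S9
variable {Γ : YoungDiagram}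

/-! ### mem/length facts -/

lemma mem_iff_colLen {u v : ℕ} : (u, v) ∈ Γ ↔ u < Γ.colLen v := YoungDiagram.mem_iff_lt_colLen
lemma mem_iff_rowLen {u v : ℕ} : (u, v) ∈ Γ ↔ v < Γ.rowLen u := YoungDiagram.mem_iff_lt_rowLen

/-! ### the break lemma -/

lemma not_linked_box {p q : ℕ} (hpq : (p, q) ∈ Γ) :
    ¬ linked Γ (dd (Ftt Γ p q)) q := by
  rintro ⟨u, ⟨t1, ⟨hs1, ht1⟩, hd1⟩, ⟨t2, ⟨hs2, ht2⟩, hd2⟩⟩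
  have hq : q < Γ.rowLen p := mem_iff_rowLen.1 hpq
  have hcu : Γ.colLen q ≤ u := by
    by_contra h; exact hs1 (mem_iff_colLen.2 (by omega))
  have hddf : dd (Ftt Γ p q) =
      ((p : ℤ) - Γ.colLen q, ((Γ.rowLen p - 1 : ℕ) : ℤ) - q) := rfl
  rw [hddf] at hd1 hd2
  simp only [dd, Prod.ext_iff] at hd1 hd2
  -- t2.2 = rowLen p
  have ht22 : (t2.2 : ℤ) = Γ.rowLen p := by
    have := hd2.2
    have h1 : (1:ℤ) ≤ Γ.rowLen p := by exact_mod_cast Nat.one_le_iff_ne_zero.2 (by omega)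
    have : (t2.2 : ℤ) - (q + 1) = ((Γ.rowLen p - 1 : ℕ) : ℤ) - q := by exact_mod_cast this
    have hcast : ((Γ.rowLen p - 1 : ℕ) : ℤ) = (Γ.rowLen p : ℤ) - 1 := by omega
    omega
  have ht22' : t2.2 = Γ.rowLen p := by exact_mod_cast ht22
  have hnot : (p, Γ.rowLen p) ∉ Γ := by
    rw [mem_iff_rowLen]; omega
  have hcl : Γ.colLen (Γ.rowLen p) ≤ p := by
    by_contra h; exact hnot (mem_iff_colLen.2 (by omega))
  have ht2m : t2.1 < Γ.colLen (Γ.rowLen p) := by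
    have := mem_iff_colLen.1 ht2; rwa [ht22'] at this
  have ht21 : (t2.1 : ℤ) = u + p - Γ.colLen q := by omega
  omega

open Classical in
lemma iot_Ftt {p q : ℕ} :
    iot Γ (Ftt Γ p q) =
      ((Finset.range q).filter (fun v => ¬ linked Γ (dd (Ftt Γ p q)) v)).card := rfl

open Classical in
lemma iota_lt {p q : ℕ} (hpq : (p, q) ∈ Γ) {z : Z4}
    (hd : dd z = dd (Ftt Γ p q)) (hv : q < z.1.2) :
    iot Γ (Ftt Γ p q) < iot Γ z := by
  rw [iot_Ftt, iot, hd]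
  apply Finset.card_lt_card
  constructor
  · exact Finset.filter_subset_filter _ (by
      intro x hx; simp only [Finset.mem_range] at *; omega)
  · intro hsub
    have hq : q ∈ (Finset.range z.1.2).filter
        (fun v => ¬ linked Γ (dd (Ftt Γ p q)) v) := by
      simp only [Finset.mem_filter, Finset.mem_range]
      exact ⟨hv, not_linked_box hpq⟩
    have := hsub hq
    simp only [Finset.mem_filter, Finset.mem_range] at this
    omega

/-! ### descent in x -/

lemma xdesc : ∀ p : ℕ, ∀ u v q : ℕ, InA Γ ((u, v), (p, q)) → p < u →
    ∃ u' p', Equi Γ ((u, v), (p, q)) ((u', v), (p', q)) ∧ InA Γ ((u', v), (p', q)) ∧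
      p' < u' ∧ (Bad Γ ((u', v), (p', q)) ∨ u' = Γ.colLen v) := by
  intro p
  induction p using Nat.strong_induction_on with
  | _ p IH =>
    intro u v q hA hpu
    by_cases hstop : p = 0 ∨ (u - 1, v) ∈ Γ
    · refine ⟨u, p, equi_refl _, hA, hpu, ?_⟩
      rcases hstop with h0 | hm
      · by_cases hm' : (u - 1, v) ∈ Γ
        · right
          have h1 : u - 1 < Γ.colLen v := mem_iff_colLen.1 hm'
          have h2 : Γ.colLen v ≤ u := by
            by_contra h; exact hA.1 (mem_iff_colLen.2 (by omega))
          omega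
        · exact Or.inl (Or.inl ⟨by simpa using h0, show 1 ≤ u by omega, hm'⟩)
      · right
        have h1 : u - 1 < Γ.colLen v := mem_iff_colLen.1 hm
        have h2 : Γ.colLen v ≤ u := by
          by_contra h; exact hA.1 (mem_iff_colLen.2 (by omega))
        omega
    · push_neg at hstop
      obtain ⟨hp0, hm⟩ := hstop
      have hstep : Step Γ ((u - 1, v), (p - 1, q)) ((u, v), (p, q)) := by
        refine ⟨hm, hA.2, Or.inl ?_⟩
        simp only [xsh]
        rw [Nat.sub_add_cancel (by omega : 1 ≤ u), Nat.sub_add_cancel (by omega : 1 ≤ p)]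
      have hA' : InA Γ ((u - 1, v), (p - 1, q)) :=
        ⟨hm, mem_down hA.2 (by omega) le_rfl⟩
      obtain ⟨u', p', he, hA'', hlt, hst⟩ :=
        IH (p - 1) (by omega) (u - 1) v q hA' (by omega)
      exact ⟨u', p', equi_trans (equi_symm (equi_step hstep)) he, hA'', hlt, hst⟩

/-! ### main loop (negative x-difference case) -/

lemma main_tt : ∀ k : ℕ, ∀ u v p q : ℕ, InA Γ ((u, v), (p, q)) → p < u →
    Γ.rowLen 0 - q ≤ k →
    (∃ w, Bad Γ w ∧ Equi Γ ((u, v), (p, q)) w) ∨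
    (∃ c : ℕ × ℕ, c ∈ Γ ∧ Equi Γ ((u, v), (p, q)) (Ftt Γ c.1 c.2)) := by
  intro k
  induction k with
  | zero =>
    intro u v p q hA hpu hk
    exfalso
    have : (0, q) ∈ Γ := mem_down hA.2 (by omega) le_rfl
    have := mem_iff_rowLen.1 this
    omega
  | succ k IH =>
    intro u v p q hA hpu hk
    obtain ⟨u', p', he, hA', hlt, hst⟩ := xdesc p u v q hA hpu
    rcases hst with hbad | hcol
    · exact Or.inl ⟨_, hbad, he⟩
    · by_cases hy : (p', q + 1) ∈ Γ
      · have hstep : Step Γ ((u', v), (p', q)) ((u', v + 1), (p', q + 1)) := by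
          exact ⟨hA'.1, hy, Or.inr rfl⟩
        have hA'' : InA Γ ((u', v + 1), (p', q + 1)) :=
          ⟨not_mem_up hA'.1 le_rfl (by omega), hy⟩
        have hq1 : q + 1 < Γ.rowLen 0 := by
          have : (0, q + 1) ∈ Γ := mem_down hy (by omega) le_rfl
          exact mem_iff_rowLen.1 this
        obtain hres | hres := IH u' (v + 1) p' (q + 1) hA'' hlt (by omega)
        · obtain ⟨w, hb, hw⟩ := hres
          exact Or.inl ⟨w, hb, equi_trans he (equi_trans (equi_step hstep) hw)⟩
        · obtain ⟨c, hc, hw⟩ := hres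
          exact Or.inr ⟨c, hc, equi_trans he (equi_trans (equi_step hstep) hw)⟩
      · have hq : q < Γ.rowLen p' := mem_iff_rowLen.1 hA'.2
        have hq' : Γ.rowLen p' ≤ q + 1 := by
          by_contra h; exact hy (mem_iff_rowLen.2 (by omega))
        have hFtt : Ftt Γ p' v = ((u', v), (p', q)) := by
          rw [Ftt, ← hcol, show Γ.rowLen p' - 1 = q by omega]
        refine Or.inr ⟨(p', v), mem_iff_colLen.2 (by omega), ?_⟩
        rw [hFtt]
        exact he

end S9

namespace S9
variable {Γ : YoungDiagram}

/-! ### transpose transfer -/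

def sw (z : Z4) : Z4 := (z.1.swap, z.2.swap)

@[simp] lemma sw_sw (z : Z4) : sw (sw z) = z := by simp [sw]

lemma mem_sw {c : ℕ × ℕ} : c.swap ∈ Γ.transpose ↔ c ∈ Γ := by
  rw [YoungDiagram.mem_transpose, Prod.swap_swap]

lemma step_sw {z w : Z4} (h : Step Γ z w) : Step Γ.transpose (sw z) (sw w) := by
  obtain ⟨h1, h2, h3 | h3⟩ := h
  · exact ⟨by simpa [sw] using mem_sw.not.2 h1, by simpa [sw] using mem_sw.2 h2,
      Or.inr (by subst h3; rfl)⟩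
  · exact ⟨by simpa [sw] using mem_sw.not.2 h1, by simpa [sw] using mem_sw.2 h2,
      Or.inl (by subst h3; rfl)⟩

lemma equi_sw {z w : Z4} (h : Equi Γ z w) : Equi Γ.transpose (sw z) (sw w) := by
  induction h with
  | rel x y hxy => exact equi_step (step_sw hxy)
  | refl x => exact equi_refl _
  | symm _ _ _ ih => exact equi_symm ih
  | trans _ _ _ _ _ ih1 ih2 => exact equi_trans ih1 ih2

lemma equi_sw' {z w : Z4} (h : Equi Γ.transpose (sw z) (sw w)) : Equi Γ z w := by
  have := equi_sw h
  rwa [Γ.transpose_transpose, sw_sw, sw_sw] at this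

lemma bad_sw {z : Z4} : Bad Γ.transpose (sw z) ↔ Bad Γ z := by
  simp only [Bad, sw, YoungDiagram.mem_transpose, Prod.fst_swap, Prod.snd_swap,
    Prod.swap_prod_mk]
  tauto

lemma inA_sw {z : Z4} : InA Γ.transpose (sw z) ↔ InA Γ z := by
  unfold InA sw
  rw [YoungDiagram.mem_transpose, YoungDiagram.mem_transpose, Prod.swap_swap, Prod.swap_swap]

lemma sw_Ftt (p q : ℕ) : sw (Ftt Γ p q) = Fff Γ.transpose q p := by
  simp [sw, Ftt, Fff, YoungDiagram.rowLen_transpose, YoungDiagram.colLen_transpose]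

lemma sw_Fff (p q : ℕ) : sw (Fff Γ p q) = Ftt Γ.transpose q p := by
  simp [sw, Ftt, Fff, YoungDiagram.rowLen_transpose, YoungDiagram.colLen_transpose]

/-! ### membership of representatives -/

lemma inA_Ftt {p q : ℕ} (h : (p, q) ∈ Γ) : InA Γ (Ftt Γ p q) := by
  have h1 := mem_iff_colLen.1 h
  have h2 := mem_iff_rowLen.1 h
  constructor
  · rw [Ftt]; simp only; rw [mem_iff_colLen]; omega
  · rw [Ftt]; simp only; rw [mem_iff_rowLen]; omega

lemma inA_Fff {p q : ℕ} (h : (p, q) ∈ Γ) : InA Γ (Fff Γ p q) := by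
  have := inA_Ftt (Γ := Γ.transpose) (p := q) (q := p)
    (by rw [YoungDiagram.mem_transpose, Prod.swap_prod_mk]; exact h)
  rw [← sw_Fff] at this
  rwa [inA_sw] at this

lemma inA_FF {c : ℕ × ℕ} (h : c ∈ Γ) (b : Bool) : InA Γ (FF Γ c b) := by
  cases b
  · exact inA_Fff h
  · exact inA_Ftt h

/-! ### C1 : goodness -/

theorem C1tt {p q : ℕ} (hpq : (p, q) ∈ Γ) {w : Z4}
    (he : Equi Γ (Ftt Γ p q) w) : ¬ Bad Γ w := by
  intro hbad
  have hq : q < Γ.rowLen p := mem_iff_rowLen.1 hpq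
  have hp : p < Γ.colLen q := mem_iff_colLen.1 hpq
  rcases equi_cases he with heq | ⟨_, hAw⟩
  · rw [← heq] at hbad
    rcases hbad with ⟨h1, h2, h3⟩ | ⟨h1, h2, h3⟩
    · exact h3 (mem_iff_colLen.2 (by simp only [Ftt] at h2 ⊢; omega))
    · simp only [Ftt] at h1 h2; omega
  · have hdd : dd w = dd (Ftt Γ p q) := (equi_dd he).symm
    have hddf : dd (Ftt Γ p q) =
        ((p : ℤ) - Γ.colLen q, ((Γ.rowLen p - 1 : ℕ) : ℤ) - q) := rfl
    rw [hddf] at hdd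
    simp only [dd, Prod.ext_iff] at hdd
    rcases hbad with ⟨h1, h2, h3⟩ | ⟨h1, h2, h3⟩
    · -- x-bad : use the iota invariant
      have hw11 : (w.1.1 : ℤ) = Γ.colLen q - p := by omega
      have hcl : Γ.colLen w.1.2 ≤ w.1.1 - 1 := by
        by_contra hcon
        exact h3 (mem_iff_colLen.2 (by omega))
      have hvq : q < w.1.2 := by
        by_contra hcon
        have := Γ.colLen_anti w.1.2 q (by omega)
        omega
      have := iota_lt hpq ((equi_dd he).symm) hvq
      rw [equi_iot he] at this
      omega
    · -- y-bad : impossible since second coordinate of dd is nonnegative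
      omega

theorem C1ff {p q : ℕ} (hpq : (p, q) ∈ Γ) {w : Z4}
    (he : Equi Γ (Fff Γ p q) w) : ¬ Bad Γ w := by
  intro hbad
  have h1 : Equi Γ.transpose (sw (Fff Γ p q)) (sw w) := equi_sw he
  rw [sw_Fff] at h1
  exact C1tt (by rw [YoungDiagram.mem_transpose, Prod.swap_prod_mk]; exact hpq) h1
    (bad_sw.2 hbad)

theorem C1 {c : ℕ × ℕ} (hc : c ∈ Γ) (b : Bool) {w : Z4}
    (he : Equi Γ (FF Γ c b) w) : ¬ Bad Γ w := by
  cases b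
  · exact C1ff hc he
  · exact C1tt hc he

/-! ### C2 : distinctness -/

theorem C2tt {p q p' q' : ℕ} (h : (p, q) ∈ Γ) (h' : (p', q') ∈ Γ)
    (he : Equi Γ (Ftt Γ p q) (Ftt Γ p' q')) : p = p' ∧ q = q' := by
  have hdd := equi_dd he
  have hddf : dd (Ftt Γ p q) =
      ((p : ℤ) - Γ.colLen q, ((Γ.rowLen p - 1 : ℕ) : ℤ) - q) := rfl
  have hddf' : dd (Ftt Γ p' q') =
      ((p' : ℤ) - Γ.colLen q', ((Γ.rowLen p' - 1 : ℕ) : ℤ) - q') := rfl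
  rcases lt_trichotomy q q' with hlt | heq | hlt
  · exfalso
    have := iota_lt h (equi_dd (equi_symm he)) (by simpa [Ftt] using hlt)
    rw [← equi_iot he] at this
    omega
  · subst heq
    refine ⟨?_, rfl⟩
    rw [hddf, hddf'] at hdd
    simp only [Prod.ext_iff] at hdd
    omega
  · exfalso
    have := iota_lt h' (equi_dd he) (by simpa [Ftt] using hlt)
    rw [equi_iot he] at this
    omega

theorem C2tf {p q p' q' : ℕ} (h : (p, q) ∈ Γ) (h' : (p', q') ∈ Γ)
    (he : Equi Γ (Ftt Γ p q) (Fff Γ p' q')) : False := by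
  have hdd := equi_dd he
  have hp : p < Γ.colLen q := mem_iff_colLen.1 h
  have hp' : p' < Γ.colLen q' := mem_iff_colLen.1 h'
  have h1 : dd (Ftt Γ p q) = ((p : ℤ) - Γ.colLen q, ((Γ.rowLen p - 1 : ℕ) : ℤ) - q) := rfl
  have h2 : dd (Fff Γ p' q') =
      (((Γ.colLen q' - 1 : ℕ) : ℤ) - p', ((q' : ℤ) - Γ.rowLen p')) := rfl
  rw [h1, h2] at hdd
  simp only [Prod.ext_iff] at hdd
  omega

theorem C2 {c c' : ℕ × ℕ} {b b' : Bool} (hc : c ∈ Γ) (hc' : c' ∈ Γ)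
    (he : Equi Γ (FF Γ c b) (FF Γ c' b')) : c = c' ∧ b = b' := by
  cases b <;> cases b'
  · -- ff ff
    have h1 := equi_sw he
    rw [show FF Γ c false = Fff Γ c.1 c.2 from rfl,
      show FF Γ c' false = Fff Γ c'.1 c'.2 from rfl, sw_Fff, sw_Fff] at h1
    obtain ⟨e1, e2⟩ := C2tt (Γ := Γ.transpose)
      (by rw [YoungDiagram.mem_transpose, Prod.swap_prod_mk]; exact hc)
      (by rw [YoungDiagram.mem_transpose, Prod.swap_prod_mk]; exact hc') h1
    exact ⟨Prod.ext e2 e1, rfl⟩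
  · exact (C2tf hc' hc (equi_symm he)).elim
  · exact (C2tf hc hc' he).elim
  · obtain ⟨e1, e2⟩ := C2tt hc hc' he
    exact ⟨Prod.ext e1 e2, rfl⟩

/-! ### C3 : completeness -/

theorem C3 {z : Z4} (hz : InA Γ z) :
    (∃ w, Bad Γ w ∧ Equi Γ z w) ∨ (∃ c b, c ∈ Γ ∧ Equi Γ z (FF Γ c b)) := by
  obtain ⟨⟨u, v⟩, ⟨p, q⟩⟩ := z
  by_cases hx : p < u
  · obtain hres | hres := main_tt (Γ.rowLen 0 - q) u v p q hz hx le_rfl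
    · exact Or.inl hres
    · obtain ⟨c, hc, hw⟩ := hres
      exact Or.inr ⟨c, true, hc, hw⟩
  · by_cases hy : q < v
    · have hzA : InA Γ.transpose ((v, u), (q, p)) := by
        have := inA_sw.2 hz
        exact this
      obtain hres | hres := main_tt (Γ := Γ.transpose)
        (Γ.transpose.rowLen 0 - p) v u q p hzA hy le_rfl
      · obtain ⟨w, hbw, hew⟩ := hres
        refine Or.inl ⟨sw w, ?_, ?_⟩
        · rw [← bad_sw (Γ := Γ) (z := sw w), sw_sw]; exact hbw
        · exact equi_sw' (z := ((u,v),(p,q))) (w := sw w) (by rwa [sw_sw])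
      · obtain ⟨c, hc, hw⟩ := hres
        refine Or.inr ⟨(c.2, c.1), false, ?_, ?_⟩
        · exact YoungDiagram.mem_transpose.1 hc
        · refine equi_sw' (z := ((u,v),(p,q))) (w := Fff Γ c.2 c.1) ?_
          rw [sw_Fff]
          exact hw
    · exfalso
      exact hz.1 (mem_down hz.2 (by omega) (by omega))

end S9

namespace S9
open MvPolynomial

/-! ### monomials -/

def ee (u v : ℕ) : Fin 2 →₀ ℕ := Finsupp.single 0 u + Finsupp.single 1 v

@[simp] lemma ee_apply0 (u v : ℕ) : ee u v 0 = u := by simp [ee]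
@[simp] lemma ee_apply1 (u v : ℕ) : ee u v 1 = v := by simp [ee]

lemma ee_eta (m : Fin 2 →₀ ℕ) : ee (m 0) (m 1) = m := by
  ext a
  fin_cases a <;> simp

lemma ee_inj {u v u' v' : ℕ} : ee u v = ee u' v' ↔ u = u' ∧ v = v' := by
  constructor
  · intro h
    exact ⟨by rw [← ee_apply0 u v, h, ee_apply0], by rw [← ee_apply1 u v, h, ee_apply1]⟩
  · rintro ⟨rfl, rfl⟩; rfl

def mon (u v : ℕ) : Rxy := monomial (ee u v) 1

lemma mon_eq_pow (u v : ℕ) : mon u v = (X 0 : Rxy) ^ u * X 1 ^ v := by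
  rw [mon, ee, X_pow_eq_monomial, X_pow_eq_monomial, monomial_mul, one_mul]

lemma X0_mul_mon (u v : ℕ) : (X 0 : Rxy) * mon u v = mon (u + 1) v := by
  have : ee (u + 1) v = Finsupp.single 0 1 + ee u v := by
    ext a; fin_cases a <;> simp [ee] <;> omega
  rw [mon, mon, this, ← one_mul (1 : ℂ), ← monomial_mul, ← X_pow_eq_monomial, pow_one]
  norm_num

lemma X1_mul_mon (u v : ℕ) : (X 1 : Rxy) * mon u v = mon u (v + 1) := by
  have : ee u (v + 1) = Finsupp.single 1 1 + ee u v := by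
    ext a; fin_cases a <;> simp [ee] <;> omega
  rw [mon, mon, this, ← one_mul (1 : ℂ), ← monomial_mul, ← X_pow_eq_monomial, pow_one]
  norm_num

variable {Γ : YoungDiagram}

/-! ### membership in the monomial ideal -/

theorem mem_mI {f : Rxy} :
    f ∈ monomialIdeal Γ ↔ ∀ u v : ℕ, (u, v) ∈ Γ → coeff (ee u v) f = 0 := by
  constructor
  · intro hf
    refine Submodule.span_induction ?_ ?_ ?_ ?_ hf
    · rintro x ⟨u0, v0, hno, rfl⟩ u v huv
      rw [← mon_eq_pow, mon, coeff_monomial]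
      split_ifs with h
      · exact absurd (ee_inj.1 h) (by rintro ⟨rfl, rfl⟩; exact hno huv)
      · rfl
    · intro u v _; simp
    · intro x y _ _ hx hy u v huv
      simp [coeff_add, hx u v huv, hy u v huv]
    · intro r x _ hx u v huv
      rw [smul_eq_mul, coeff_mul]
      refine Finset.sum_eq_zero ?_
      rintro ⟨i, j⟩ hij
      rw [Finset.HasAntidiagonal.mem_antidiagonal] at hij
      have hj0 : j 0 ≤ u := by
        have := congrArg (fun g : Fin 2 →₀ ℕ => g 0) hij
        simp only [Finsupp.add_apply, ee_apply0] at this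
        omega
      have hj1 : j 1 ≤ v := by
        have := congrArg (fun g : Fin 2 →₀ ℕ => g 1) hij
        simp only [Finsupp.add_apply, ee_apply1] at this
        omega
      have : (j 0, j 1) ∈ Γ := Γ.up_left_mem hj0 hj1 huv
      have := hx (j 0) (j 1) this
      rw [ee_eta] at this
      simp [this]
  · intro hcf
    rw [as_sum f]
    refine Ideal.sum_mem _ ?_
    intro m hm
    have hnot : (m 0, m 1) ∉ Γ := by
      intro hmem
      have := hcf (m 0) (m 1) hmem
      rw [ee_eta] at this
      exact (mem_support_iff.1 hm) this
    have hgen : mon (m 0) (m 1) ∈ monomialIdeal Γ :=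
      Ideal.subset_span ⟨m 0, m 1, hnot, mon_eq_pow _ _⟩
    have : monomial m (coeff m f) = C (coeff m f) * mon (m 0) (m 1) := by
      rw [mon, ee_eta, ← smul_eq_C_mul, smul_monomial, smul_eq_mul, mul_one]
    rw [this]
    exact Ideal.mul_mem_left _ _ hgen

/-! ### coefficients on the quotient -/

variable (Γ) in
def qc (x : Rxy ⧸ monomialIdeal Γ) (u v : ℕ) : ℂ :=
  if (u, v) ∈ Γ then coeff (ee u v) (Quotient.out x) else 0

lemma qc_mk (f : Rxy) (u v : ℕ) :
    qc Γ (Ideal.Quotient.mk (monomialIdeal Γ) f) u v =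
      if (u, v) ∈ Γ then coeff (ee u v) f else 0 := by
  rw [qc]
  split_ifs with h
  · have hmk : Ideal.Quotient.mk (monomialIdeal Γ)
        (Quotient.out (Ideal.Quotient.mk (monomialIdeal Γ) f)) =
        Ideal.Quotient.mk (monomialIdeal Γ) f := Quotient.out_eq _
    have hsub := Ideal.Quotient.eq.1 hmk
    have := mem_mI.1 hsub u v h
    rw [coeff_sub, sub_eq_zero] at this
    rw [this]
  · rfl

lemma qc_not_mem {x : Rxy ⧸ monomialIdeal Γ} {u v : ℕ} (h : (u, v) ∉ Γ) :
    qc Γ x u v = 0 := by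
  rw [qc, if_neg h]

lemma qc_zero (u v : ℕ) : qc Γ (0 : Rxy ⧸ monomialIdeal Γ) u v = 0 := by
  have : (0 : Rxy ⧸ monomialIdeal Γ) = Ideal.Quotient.mk _ 0 := by simp
  rw [this, qc_mk]
  simp

lemma qc_add (x y : Rxy ⧸ monomialIdeal Γ) (u v : ℕ) :
    qc Γ (x + y) u v = qc Γ x u v + qc Γ y u v := by
  obtain ⟨f, rfl⟩ := Ideal.Quotient.mk_surjective x
  obtain ⟨g, rfl⟩ := Ideal.Quotient.mk_surjective y
  rw [← map_add, qc_mk, qc_mk, qc_mk]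
  split_ifs <;> simp [coeff_add]

lemma qc_csmul (c : ℂ) (x : Rxy ⧸ monomialIdeal Γ) (u v : ℕ) :
    qc Γ (c • x) u v = c * qc Γ x u v := by
  obtain ⟨f, rfl⟩ := Ideal.Quotient.mk_surjective x
  have : c • (Ideal.Quotient.mk (monomialIdeal Γ) f) = Ideal.Quotient.mk _ (c • f) := by
    rw [← Ideal.Quotient.mkₐ_eq_mk ℂ, ← map_smul]
  rw [this, qc_mk, qc_mk]
  split_ifs <;> simp

lemma qc_ext {x y : Rxy ⧸ monomialIdeal Γ}
    (h : ∀ u v : ℕ, (u, v) ∈ Γ → qc Γ x u v = qc Γ y u v) : x = y := by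
  obtain ⟨f, rfl⟩ := Ideal.Quotient.mk_surjective x
  obtain ⟨g, rfl⟩ := Ideal.Quotient.mk_surjective y
  rw [Ideal.Quotient.eq]
  rw [mem_mI]
  intro u v huv
  have := h u v huv
  rw [qc_mk, qc_mk, if_pos huv, if_pos huv] at this
  rw [coeff_sub, this, sub_self]

lemma coeff_X0_mul (f : Rxy) (u v : ℕ) :
    coeff (ee u v) ((X 0 : Rxy) * f) = if u = 0 then 0 else coeff (ee (u - 1) v) f := by
  rw [coeff_X_mul']
  split_ifs with h1 h2 h2
  · exfalso; rw [Finsupp.mem_support_iff] at h1; simp [h2] at h1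
  · have : ee u v - Finsupp.single 0 1 = ee (u - 1) v := by
      ext a; fin_cases a <;> simp [ee, Finsupp.sub_apply]
    rw [this]
  · rfl
  · exfalso; exact h1 (by rw [Finsupp.mem_support_iff]; simp [h2])

lemma coeff_X1_mul (f : Rxy) (u v : ℕ) :
    coeff (ee u v) ((X 1 : Rxy) * f) = if v = 0 then 0 else coeff (ee u (v - 1)) f := by
  rw [coeff_X_mul']
  split_ifs with h1 h2 h2
  · exfalso; rw [Finsupp.mem_support_iff] at h1; simp [h2] at h1
  · have : ee u v - Finsupp.single 1 1 = ee u (v - 1) := by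
      ext a; fin_cases a <;> simp [ee, Finsupp.sub_apply]
    rw [this]
  · rfl
  · exfalso; exact h1 (by rw [Finsupp.mem_support_iff]; simp [h2])

lemma qc_X0smul (x : Rxy ⧸ monomialIdeal Γ) {u v : ℕ} (h : (u, v) ∈ Γ) :
    qc Γ ((X 0 : Rxy) • x) u v = if u = 0 then 0 else qc Γ x (u - 1) v := by
  obtain ⟨f, rfl⟩ := Ideal.Quotient.mk_surjective x
  have hs : (X 0 : Rxy) • (Ideal.Quotient.mk (monomialIdeal Γ) f) =
      Ideal.Quotient.mk _ (X 0 * f) := by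
    rw [← smul_eq_mul, ← Ideal.Quotient.mk_eq_mk, ← Ideal.Quotient.mk_eq_mk,
      Submodule.Quotient.mk_smul]
  rw [hs, qc_mk, if_pos h, coeff_X0_mul]
  split_ifs with h1
  · rfl
  · rw [qc_mk, if_pos (mem_down h (by omega) le_rfl)]

lemma qc_X1smul (x : Rxy ⧸ monomialIdeal Γ) {u v : ℕ} (h : (u, v) ∈ Γ) :
    qc Γ ((X 1 : Rxy) • x) u v = if v = 0 then 0 else qc Γ x u (v - 1) := by
  obtain ⟨f, rfl⟩ := Ideal.Quotient.mk_surjective x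
  have hs : (X 1 : Rxy) • (Ideal.Quotient.mk (monomialIdeal Γ) f) =
      Ideal.Quotient.mk _ (X 1 * f) := by
    rw [← smul_eq_mul, ← Ideal.Quotient.mk_eq_mk, ← Ideal.Quotient.mk_eq_mk,
      Submodule.Quotient.mk_smul]
  rw [hs, qc_mk, if_pos h, coeff_X1_mul]
  split_ifs with h1
  · rfl
  · rw [qc_mk, if_pos (mem_down h le_rfl (by omega))]

end S9

namespace S9
open MvPolynomial
variable {Γ : YoungDiagram}

/-! ### monomial elements of the ideal -/

variable (Γ) in
def monI (u v : ℕ) (h : (u, v) ∉ Γ) : monomialIdeal Γ :=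
  ⟨mon u v, mem_mI.2 (fun u' v' huv => by
    rw [mon, coeff_monomial]
    split_ifs with he
    · obtain ⟨rfl, rfl⟩ := ee_inj.1 he
      exact absurd huv h
    · rfl)⟩

variable (Γ) in
abbrev HomT := monomialIdeal Γ →ₗ[Rxy] Rxy ⧸ monomialIdeal Γ

def cval (ψ : HomT Γ) (z : Z4) : ℂ :=
  if h : z.1 ∉ Γ then qc Γ (ψ (monI Γ z.1.1 z.1.2 h)) z.2.1 z.2.2 else 0

lemma monI_smul_x {u v : ℕ} (h : (u + 1, v) ∉ Γ) (h' : (u, v) ∉ Γ) :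
    monI Γ (u + 1) v h = (X 0 : Rxy) • monI Γ u v h' :=
  Subtype.ext (by
    show mon (u + 1) v = (X 0 : Rxy) • mon u v
    rw [smul_eq_mul, X0_mul_mon])

lemma monI_smul_y {u v : ℕ} (h : (u, v + 1) ∉ Γ) (h' : (u, v) ∉ Γ) :
    monI Γ u (v + 1) h = (X 1 : Rxy) • monI Γ u v h' :=
  Subtype.ext (by
    show mon u (v + 1) = (X 1 : Rxy) • mon u v
    rw [smul_eq_mul, X1_mul_mon])

lemma cval_step {ψ : HomT Γ} {z w : Z4} (h : Step Γ z w) : cval ψ z = cval ψ w := by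
  obtain ⟨⟨u, v⟩, ⟨p, q⟩⟩ := z
  obtain ⟨h1, h2, h3 | h3⟩ := h <;> subst h3 <;> simp only [xsh, ysh] at h2 ⊢
  · have h1' : ((u + 1 : ℕ), v) ∉ Γ := not_mem_up h1 (by omega) le_rfl
    rw [cval, cval, dif_pos h1, dif_pos h1']
    rw [show monI Γ (u + 1) v h1' = (X 0 : Rxy) • monI Γ u v h1 from monI_smul_x _ _,
      map_smul, qc_X0smul _ h2]
    simp
  · have h1' : (u, (v + 1 : ℕ)) ∉ Γ := not_mem_up h1 le_rfl (by omega)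
    rw [cval, cval, dif_pos h1, dif_pos h1']
    rw [show monI Γ u (v + 1) h1' = (X 1 : Rxy) • monI Γ u v h1 from monI_smul_y _ _,
      map_smul, qc_X1smul _ h2]
    simp

lemma cval_equi {ψ : HomT Γ} {z w : Z4} (h : Equi Γ z w) : cval ψ z = cval ψ w := by
  induction h with
  | rel x y hxy => exact cval_step hxy
  | refl x => rfl
  | symm _ _ _ ih => exact ih.symm
  | trans _ _ _ _ _ ih1 ih2 => exact ih1.trans ih2

lemma cval_bad {ψ : HomT Γ} {z : Z4} (hA : InA Γ z) (hb : Bad Γ z) : cval ψ z = 0 := by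
  rcases hb with ⟨h0, h1, h2⟩ | ⟨h0, h1, h2⟩
  · rw [cval, dif_pos hA.1]
    have : monI Γ z.1.1 z.1.2 hA.1 = (X 0 : Rxy) • monI Γ (z.1.1 - 1) z.1.2 h2 := by
      have he : z.1.1 - 1 + 1 = z.1.1 := by omega
      exact Subtype.ext (by
        show mon z.1.1 z.1.2 = (X 0 : Rxy) • mon (z.1.1 - 1) z.1.2
        rw [smul_eq_mul, X0_mul_mon, he])
    rw [this, map_smul, qc_X0smul _ hA.2, if_pos h0]
  · rw [cval, dif_pos hA.1]
    have : monI Γ z.1.1 z.1.2 hA.1 = (X 1 : Rxy) • monI Γ z.1.1 (z.1.2 - 1) h2 := by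
      have he : z.1.2 - 1 + 1 = z.1.2 := by omega
      exact Subtype.ext (by
        show mon z.1.1 z.1.2 = (X 1 : Rxy) • mon z.1.1 (z.1.2 - 1)
        rw [smul_eq_mul, X1_mul_mon, he])
    rw [this, map_smul, qc_X1smul _ hA.2, if_pos h0]

/-! ### uniqueness of sources in a class -/

lemma equi_src_eq {s s' t : ℕ × ℕ} {F0 : Z4} (h : Equi Γ ((s, t) : Z4) F0)
    (h' : Equi Γ ((s', t) : Z4) F0) : s = s' := by
  have h1 := (equi_dd h).trans (equi_dd h').symm
  simp only [dd, Prod.ext_iff] at h1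
  exact Prod.ext (by omega) (by omega)

lemma equi_src_not_mem {s t : ℕ × ℕ} {F0 : Z4} (hA : InA Γ F0)
    (h : Equi Γ ((s, t) : Z4) F0) : s ∉ Γ := by
  rcases equi_cases h with heq | ⟨hz, _⟩
  · rw [show s = F0.1 from congrArg Prod.fst heq]
    exact hA.1
  · exact hz.1

/-! ### the model homomorphisms -/

variable (Γ) in
open Classical in
def Phi (F0 : Z4) : Rxy →ₗ[ℂ] Rxy ⧸ monomialIdeal Γ :=
  ∑ t ∈ Γ.cells,
    if hex : ∃ s : ℕ × ℕ, Equi Γ ((s, t) : Z4) F0 then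
      (lcoeff (R := ℂ) (ee hex.choose.1 hex.choose.2)).smulRight
        (Ideal.Quotient.mk (monomialIdeal Γ) (mon t.1 t.2))
    else 0

variable (Γ) in
def qcA (u v : ℕ) : (Rxy ⧸ monomialIdeal Γ) →+ ℂ where
  toFun x := qc Γ x u v
  map_zero' := qc_zero u v
  map_add' x y := qc_add x y u v

lemma qcA_apply (x : Rxy ⧸ monomialIdeal Γ) (u v : ℕ) : qcA Γ u v x = qc Γ x u v := rfl

open Classical in
lemma qc_Phi (F0 : Z4) (f : Rxy) {p0 q0 : ℕ} (h : (p0, q0) ∈ Γ) :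
    qc Γ (Phi Γ F0 f) p0 q0 =
      if hex : ∃ s : ℕ × ℕ, Equi Γ ((s, (p0, q0)) : Z4) F0 then
        coeff (ee hex.choose.1 hex.choose.2) f else 0 := by
  have : qc Γ (Phi Γ F0 f) p0 q0 = qcA Γ p0 q0 (Phi Γ F0 f) := rfl
  rw [this, Phi, LinearMap.sum_apply, map_sum]
  rw [Finset.sum_eq_single (p0, q0)]
  · split_ifs with hex
    · rw [qcA_apply]
      rw [LinearMap.smulRight_apply, qc_csmul, qc_mk, if_pos h, mon,
        coeff_monomial, if_pos rfl, mul_one, lcoeff_apply]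
    · show qc Γ ((0 : Rxy →ₗ[ℂ] _) f) p0 q0 = _
      rw [LinearMap.zero_apply]
      exact qc_zero _ _
  · intro t _ hne
    rw [qcA_apply]
    split_ifs with hex
    · rw [LinearMap.smulRight_apply, qc_csmul, qc_mk, if_pos h, mon, coeff_monomial,
        if_neg, mul_zero]
      intro he
      obtain ⟨e1, e2⟩ := ee_inj.1 he
      exact hne (Prod.ext e1 e2)
    · show qc Γ ((0 : Rxy →ₗ[ℂ] _) f) p0 q0 = 0
      rw [LinearMap.zero_apply]
      exact qc_zero _ _
  · intro hno
    exact absurd ((YoungDiagram.mem_cells _).2 h) hno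

end S9

namespace S9
open MvPolynomial
variable {Γ : YoungDiagram}

open Classical in
lemma Phi_X0mul (F0 : Z4) (hA : InA Γ F0)
    (hGood : ∀ w, Equi Γ F0 w → ¬ Bad Γ w)
    (f : Rxy) (hf : f ∈ monomialIdeal Γ) :
    Phi Γ F0 ((X 0 : Rxy) * f) = (X 0 : Rxy) • Phi Γ F0 f := by
  apply qc_ext
  intro p0 q0 hmem
  rw [qc_Phi F0 _ hmem, qc_X0smul _ hmem]
  by_cases h1 : ∃ s : ℕ × ℕ, Equi Γ ((s, (p0, q0)) : Z4) F0
  · rw [dif_pos h1]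
    set s := h1.choose with hs_def
    have hs : Equi Γ ((s, (p0, q0)) : Z4) F0 := h1.choose_spec
    rw [show (ee h1.choose.1 h1.choose.2) = ee s.1 s.2 from rfl, coeff_X0_mul]
    by_cases hs1 : s.1 = 0
    · rw [if_pos hs1]
      split_ifs with hp0
      · rfl
      · rw [qc_Phi F0 _ (mem_down hmem (by omega) le_rfl)]
        rw [dif_neg]
        rintro ⟨s'', hs''⟩
        have hd := (equi_dd hs'').trans (equi_dd hs).symm
        simp only [dd, Prod.ext_iff] at hd
        omega
    · rw [if_neg hs1]
      by_cases hmem2 : ((s.1 - 1 : ℕ), s.2) ∈ Γ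
      · rw [mem_mI.1 hf _ _ hmem2]
        split_ifs with hp0
        · rfl
        · rw [qc_Phi F0 _ (mem_down hmem (by omega) le_rfl)]
          split_ifs with h2
          · have hs'' : Equi Γ ((h2.choose, ((p0 - 1 : ℕ), q0)) : Z4) F0 := h2.choose_spec
            have hd := (equi_dd hs'').trans (equi_dd hs).symm
            simp only [dd, Prod.ext_iff] at hd
            have : h2.choose = ((s.1 - 1 : ℕ), s.2) := Prod.ext (by omega) (by omega)
            rw [this, mem_mI.1 hf _ _ hmem2]
          · rfl
      · split_ifs with hp0
        · -- bad configuration in the class of F0 : contradiction with goodness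
          exfalso
          refine hGood ((s, (p0, q0)) : Z4) (equi_symm hs) ?_
          exact Or.inl ⟨by simpa using hp0, show 1 ≤ s.1 by omega, hmem2⟩
        · -- step backwards in x
          have hstep : Step Γ ((((s.1 - 1 : ℕ), s.2), ((p0 - 1 : ℕ), q0)) : Z4)
              ((s, (p0, q0)) : Z4) := by
            refine ⟨hmem2, hmem, Or.inl ?_⟩
            show ((s.1, s.2), (p0, q0)) = _
            simp only [xsh]
            rw [Nat.sub_add_cancel (by omega), Nat.sub_add_cancel (by omega)]
          have h2 : ∃ s'' : ℕ × ℕ, Equi Γ ((s'', ((p0 - 1 : ℕ), q0)) : Z4) F0 :=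
            ⟨((s.1 - 1 : ℕ), s.2), equi_trans (equi_step hstep) hs⟩
          rw [qc_Phi F0 _ (mem_down hmem (by omega) le_rfl), dif_pos h2]
          have : h2.choose = ((s.1 - 1 : ℕ), s.2) :=
            equi_src_eq h2.choose_spec (equi_trans (equi_step hstep) hs)
          rw [this]
  · rw [dif_neg h1]
    split_ifs with hp0
    · rfl
    · rw [qc_Phi F0 _ (mem_down hmem (by omega) le_rfl)]
      rw [dif_neg]
      rintro ⟨s'', hs''⟩
      have hnm : s'' ∉ Γ := equi_src_not_mem hA hs''
      have hstep : Step Γ ((s'', ((p0 - 1 : ℕ), q0)) : Z4)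
          ((((s''.1 + 1 : ℕ), s''.2), (p0, q0)) : Z4) := by
        refine ⟨hnm, hmem, Or.inl ?_⟩
        simp only [xsh]
        rw [Nat.sub_add_cancel (by omega)]
      exact h1 ⟨((s''.1 + 1 : ℕ), s''.2),
        equi_trans (equi_symm (equi_step hstep)) hs''⟩

open Classical in
lemma Phi_X1mul (F0 : Z4) (hA : InA Γ F0)
    (hGood : ∀ w, Equi Γ F0 w → ¬ Bad Γ w)
    (f : Rxy) (hf : f ∈ monomialIdeal Γ) :
    Phi Γ F0 ((X 1 : Rxy) * f) = (X 1 : Rxy) • Phi Γ F0 f := by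
  apply qc_ext
  intro p0 q0 hmem
  rw [qc_Phi F0 _ hmem, qc_X1smul _ hmem]
  by_cases h1 : ∃ s : ℕ × ℕ, Equi Γ ((s, (p0, q0)) : Z4) F0
  · rw [dif_pos h1]
    set s := h1.choose with hs_def
    have hs : Equi Γ ((s, (p0, q0)) : Z4) F0 := h1.choose_spec
    rw [show (ee h1.choose.1 h1.choose.2) = ee s.1 s.2 from rfl, coeff_X1_mul]
    by_cases hs1 : s.2 = 0
    · rw [if_pos hs1]
      split_ifs with hp0
      · rfl
      · rw [qc_Phi F0 _ (mem_down hmem le_rfl (by omega))]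
        rw [dif_neg]
        rintro ⟨s'', hs''⟩
        have hd := (equi_dd hs'').trans (equi_dd hs).symm
        simp only [dd, Prod.ext_iff] at hd
        omega
    · rw [if_neg hs1]
      by_cases hmem2 : (s.1, (s.2 - 1 : ℕ)) ∈ Γ
      · rw [mem_mI.1 hf _ _ hmem2]
        split_ifs with hp0
        · rfl
        · rw [qc_Phi F0 _ (mem_down hmem le_rfl (by omega))]
          split_ifs with h2
          · have hs'' : Equi Γ ((h2.choose, (p0, (q0 - 1 : ℕ))) : Z4) F0 := h2.choose_spec
            have hd := (equi_dd hs'').trans (equi_dd hs).symm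
            simp only [dd, Prod.ext_iff] at hd
            have : h2.choose = (s.1, (s.2 - 1 : ℕ)) := Prod.ext (by omega) (by omega)
            rw [this, mem_mI.1 hf _ _ hmem2]
          · rfl
      · split_ifs with hp0
        · exfalso
          refine hGood ((s, (p0, q0)) : Z4) (equi_symm hs) ?_
          exact Or.inr ⟨by simpa using hp0, show 1 ≤ s.2 by omega, hmem2⟩
        · have hstep : Step Γ (((s.1, (s.2 - 1 : ℕ)), (p0, (q0 - 1 : ℕ))) : Z4)
              ((s, (p0, q0)) : Z4) := by
            refine ⟨hmem2, hmem, Or.inr ?_⟩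
            show ((s.1, s.2), (p0, q0)) = _
            simp only [ysh]
            rw [Nat.sub_add_cancel (by omega), Nat.sub_add_cancel (by omega)]
          have h2 : ∃ s'' : ℕ × ℕ, Equi Γ ((s'', (p0, (q0 - 1 : ℕ))) : Z4) F0 :=
            ⟨(s.1, (s.2 - 1 : ℕ)), equi_trans (equi_step hstep) hs⟩
          rw [qc_Phi F0 _ (mem_down hmem le_rfl (by omega)), dif_pos h2]
          have : h2.choose = (s.1, (s.2 - 1 : ℕ)) :=
            equi_src_eq h2.choose_spec (equi_trans (equi_step hstep) hs)
          rw [this]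
  · rw [dif_neg h1]
    split_ifs with hp0
    · rfl
    · rw [qc_Phi F0 _ (mem_down hmem le_rfl (by omega))]
      rw [dif_neg]
      rintro ⟨s'', hs''⟩
      have hnm : s'' ∉ Γ := equi_src_not_mem hA hs''
      have hstep : Step Γ ((s'', (p0, (q0 - 1 : ℕ))) : Z4)
          (((s''.1, (s''.2 + 1 : ℕ)), (p0, q0)) : Z4) := by
        refine ⟨hnm, hmem, Or.inr ?_⟩
        simp only [ysh]
        rw [Nat.sub_add_cancel (by omega)]
      exact h1 ⟨(s''.1, (s''.2 + 1 : ℕ)),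
        equi_trans (equi_symm (equi_step hstep)) hs''⟩

end S9

namespace S9
open MvPolynomial
variable {Γ : YoungDiagram}

@[simp] lemma monI_coe (u v : ℕ) (h : (u, v) ∉ Γ) : ((monI Γ u v h : monomialIdeal Γ) : Rxy) = mon u v := rfl

open Classical in
lemma qc_Phi' (F0 : Z4) (f : Rxy) {t0 : ℕ × ℕ} (h : t0 ∈ Γ) :
    qc Γ (Phi Γ F0 f) t0.1 t0.2 =
      if hex : ∃ s : ℕ × ℕ, Equi Γ ((s, t0) : Z4) F0 then
        coeff (ee hex.choose.1 hex.choose.2) f else 0 := by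
  obtain ⟨p0, q0⟩ := t0
  exact qc_Phi F0 f h

/-! ### bundled homomorphisms -/

variable (Γ) in
def phiH (F0 : Z4) (hA : InA Γ F0) (hGood : ∀ w, Equi Γ F0 w → ¬ Bad Γ w) : HomT Γ where
  toFun m := Phi Γ F0 m.val
  map_add' m m' := by
    show Phi Γ F0 ((m : Rxy) + (m' : Rxy)) = Phi Γ F0 (m : Rxy) + Phi Γ F0 (m' : Rxy)
    rw [map_add]
  map_smul' r m := by
    obtain ⟨f, hf⟩ := m
    show Phi Γ F0 (r * f) = r • Phi Γ F0 f
    induction r using MvPolynomial.induction_on generalizing f with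
    | C a =>
        rw [← smul_eq_C_mul, map_smul,
          show (C a : Rxy) • (Phi Γ F0 f) = a • Phi Γ F0 f from algebraMap_smul Rxy a _]
    | add p q hp hq =>
        rw [add_mul, map_add, hp f hf, hq f hf, add_smul]
    | mul_X p n hp =>
        have hXf : (X n : Rxy) * f ∈ monomialIdeal Γ := Ideal.mul_mem_left _ _ hf
        rw [mul_assoc, hp (X n * f) hXf]
        have hX : Phi Γ F0 ((X n : Rxy) * f) = (X n : Rxy) • Phi Γ F0 f := by
          fin_cases n
          · exact Phi_X0mul F0 hA hGood f hf
          · exact Phi_X1mul F0 hA hGood f hf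
        rw [hX, smul_smul]

open Classical in
lemma cval_phiH (F0 : Z4) (hA : InA Γ F0) (hGood : ∀ w, Equi Γ F0 w → ¬ Bad Γ w)
    {z : Z4} (hz : InA Γ z) :
    cval (phiH Γ F0 hA hGood) z = if Equi Γ z F0 then 1 else 0 := by
  obtain ⟨s1, t1⟩ := z
  rw [cval, dif_pos hz.1]
  show qc Γ (Phi Γ F0 (mon s1.1 s1.2)) t1.1 t1.2 = _
  rw [qc_Phi' F0 _ hz.2]
  by_cases hex : ∃ s : ℕ × ℕ, Equi Γ ((s, t1) : Z4) F0
  · rw [dif_pos hex]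
    by_cases heq : Equi Γ ((s1, t1) : Z4) F0
    · rw [if_pos heq, show hex.choose = s1 from equi_src_eq hex.choose_spec heq,
        mon, coeff_monomial, if_pos rfl]
    · rw [if_neg heq, mon, coeff_monomial, if_neg]
      intro he
      obtain ⟨e1, e2⟩ := ee_inj.1 he
      exact heq (by rw [show s1 = hex.choose from Prod.ext e1 e2]
                    exact hex.choose_spec)
  · rw [dif_neg hex, if_neg (fun h => hex ⟨s1, h⟩)]

/-! ### cval is linear in the homomorphism -/

lemma cval_zero (z : Z4) : cval (0 : HomT Γ) z = 0 := by
  by_cases h : z.1 ∉ Γ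
  · rw [cval, dif_pos h, LinearMap.zero_apply]
    exact qc_zero _ _
  · rw [cval, dif_neg h]

lemma cval_csmul (a : ℂ) (ψ : HomT Γ) (z : Z4) : cval (a • ψ) z = a * cval ψ z := by
  by_cases h : z.1 ∉ Γ
  · rw [cval, cval, dif_pos h, dif_pos h, LinearMap.smul_apply, qc_csmul]
  · rw [cval, cval, dif_neg h, dif_neg h, mul_zero]

lemma cval_sum {ι : Type*} (s : Finset ι) (ψ : ι → HomT Γ) (z : Z4) :
    cval (∑ i ∈ s, ψ i) z = ∑ i ∈ s, cval (ψ i) z := by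
  by_cases h : z.1 ∉ Γ
  · rw [cval, dif_pos h, LinearMap.sum_apply,
      ← qcA_apply, map_sum]
    exact Finset.sum_congr rfl fun i _ => by rw [cval, dif_pos h]; rfl
  · rw [cval, dif_neg h]
    symm
    exact Finset.sum_eq_zero fun i _ => by rw [cval, dif_neg h]

/-! ### the basis family -/

variable (Γ) in
def fam (i : {c : ℕ × ℕ // c ∈ Γ.cells} × Bool) : HomT Γ :=
  phiH Γ (FF Γ i.1.val i.2) (inA_FF ((YoungDiagram.mem_cells _).1 i.1.prop) i.2)
    (fun _ he hb => C1 ((YoungDiagram.mem_cells _).1 i.1.prop) i.2 he hb)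

open Classical in
lemma cval_fam (i j : {c : ℕ × ℕ // c ∈ Γ.cells} × Bool) :
    cval (fam Γ i) (FF Γ j.1.val j.2) = if j = i then 1 else 0 := by
  rw [fam, cval_phiH _ _ _ (inA_FF ((YoungDiagram.mem_cells _).1 j.1.prop) j.2)]
  by_cases hij : j = i
  · rw [if_pos hij, if_pos (by rw [hij]; exact equi_refl _)]
  · rw [if_neg hij, if_neg]
    intro he
    obtain ⟨e1, e2⟩ := C2 ((YoungDiagram.mem_cells _).1 j.1.prop)
      ((YoungDiagram.mem_cells _).1 i.1.prop) he
    exact hij (Prod.ext (Subtype.ext e1) e2)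

open Classical in
lemma fam_indep : LinearIndependent ℂ (fam Γ) := by
  rw [Fintype.linearIndependent_iff]
  intro g hg i0
  have h1 := congrArg (fun ψ => cval ψ (FF Γ i0.1.val i0.2)) hg
  rw [cval_sum, cval_zero] at h1
  rw [Finset.sum_congr rfl (fun i _ => by rw [cval_csmul, cval_fam i i0])] at h1
  rwa [Finset.sum_eq_single i0 (fun i _ hne => by rw [if_neg (fun hh => hne hh.symm), mul_zero])
    (fun habs => absurd (Finset.mem_univ i0) habs), if_pos rfl, mul_one] at h1

/-! ### spanning -/

lemma hom_ext' {ψ₁ ψ₂ : HomT Γ}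
    (h : ∀ u v (hn : (u, v) ∉ Γ), ψ₁ (monI Γ u v hn) = ψ₂ (monI Γ u v hn)) : ψ₁ = ψ₂ := by
  apply LinearMap.ext
  rintro ⟨f, hf⟩
  have hdec : (⟨f, hf⟩ : monomialIdeal Γ) =
      ∑ m ∈ f.support.attach, (C (coeff m.val f) : Rxy) •
        monI Γ (m.val 0) (m.val 1) (by
          intro hmem
          have := mem_mI.1 hf (m.val 0) (m.val 1) hmem
          rw [ee_eta] at this
          exact (mem_support_iff.1 m.prop) this) := by
    apply Subtype.ext
    simp only [AddSubmonoidClass.coe_finset_sum, SetLike.val_smul, monI_coe]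
    rw [Finset.sum_attach f.support
      (fun m => (C (coeff m f) : Rxy) • mon (m 0) (m 1))]
    conv_lhs => rw [as_sum f]
    refine Finset.sum_congr rfl fun m _ => ?_
    rw [smul_eq_mul, mon, ee_eta, ← smul_eq_C_mul, smul_monomial, smul_eq_mul, mul_one]
  rw [hdec, map_sum, map_sum]
  refine Finset.sum_congr rfl fun m _ => ?_
  rw [map_smul, map_smul, h]

open Classical in
lemma span_fam (ψ : HomT Γ) :
    ψ = ∑ i : {c : ℕ × ℕ // c ∈ Γ.cells} × Bool,
          cval ψ (FF Γ i.1.val i.2) • fam Γ i := by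
  apply hom_ext'
  intro u v hn
  apply qc_ext
  intro p0 q0 hpq
  have hz : InA Γ (((u, v), (p0, q0)) : Z4) := ⟨hn, hpq⟩
  have hR : ∀ (ψ' : HomT Γ), qc Γ (ψ' (monI Γ u v hn)) p0 q0 =
      cval ψ' (((u, v), (p0, q0)) : Z4) := fun ψ' => by rw [cval, dif_pos hn]
  rw [hR ψ, hR _, cval_sum]
  have hterm : ∀ i : {c : ℕ × ℕ // c ∈ Γ.cells} × Bool,
      cval (cval ψ (FF Γ i.1.val i.2) • fam Γ i) (((u, v), (p0, q0)) : Z4) =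
        cval ψ (FF Γ i.1.val i.2) *
          (if Equi Γ (((u, v), (p0, q0)) : Z4) (FF Γ i.1.val i.2) then 1 else 0) := by
    intro i
    rw [cval_csmul, fam, cval_phiH _ _ _ hz]
  rw [Finset.sum_congr rfl (fun i _ => hterm i)]
  rcases C3 hz with ⟨w, hbw, hew⟩ | ⟨c, b, hc, hzF⟩
  · -- bad class : both sides vanish
    have hInAw : InA Γ w := by
      rcases equi_cases hew with heq | ⟨_, hw⟩
      · rw [← heq]; exact hz
      · exact hw
    rw [cval_equi hew, cval_bad hInAw hbw]
    symm
    refine Finset.sum_eq_zero fun i _ => ?_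
    rw [if_neg (fun he => C1 ((YoungDiagram.mem_cells _).1 i.1.prop) i.2
        (equi_trans (equi_symm he) hew) hbw), mul_zero]
  · -- equivalent to a representative
    have hc' : c ∈ Γ.cells := (YoungDiagram.mem_cells _).2 hc
    set i0 : {c : ℕ × ℕ // c ∈ Γ.cells} × Bool := (⟨c, hc'⟩, b) with hi0
    have hzF0 : Equi Γ (((u, v), (p0, q0)) : Z4) (FF Γ i0.1.val i0.2) := hzF
    rw [cval_equi hzF0]
    rw [Finset.sum_eq_single i0 (fun i _ hne => by
      rw [if_neg, mul_zero]
      intro he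
      obtain ⟨e1, e2⟩ := C2 ((YoungDiagram.mem_cells _).1 i0.1.prop)
        ((YoungDiagram.mem_cells _).1 i.1.prop) (equi_trans (equi_symm hzF0) he)
      exact hne (Prod.ext (Subtype.ext e1.symm) e2.symm))
      (fun habs => absurd (Finset.mem_univ _) habs)]
    rw [if_pos hzF0, mul_one]

end S9

/-- If `Γ` has `n` boxes then `dim_ℂ Hom_R(I_Γ, R/I_Γ) = 2n`. -/
theorem statement9 (n : ℕ) (Γ : YoungDiagram) (hΓ : Γ.card = n) :
    Module.rank ℂ (monomialIdeal Γ →ₗ[Rxy] Rxy ⧸ monomialIdeal Γ)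
      = ((2 * n : ℕ) : Cardinal) := by
  classical
  have hsp : ⊤ ≤ Submodule.span ℂ (Set.range (S9.fam Γ)) := by
    intro ψ _
    rw [S9.span_fam ψ]
    exact Submodule.sum_mem _ fun i _ =>
      Submodule.smul_mem _ _ (Submodule.subset_span ⟨i, rfl⟩)
  have hrank := rank_eq_card_basis (Module.Basis.mk S9.fam_indep hsp)
  rw [hrank]
  congr 1
  rw [Fintype.card_prod, Fintype.card_coe, Fintype.card_bool]
  rw [show Γ.cells.card = n from hΓ]
  omega
end
end

section
/- For every n ≥ 0, ∑_{Y ⊢ n+1} d(Y) · q^{(n+1)−ℓ(Y)} = ∑_ν q^{n−ℓ(ν)} as polynomials in q, where the left-hand sum runs over all Young diagrams Y with n+1 boxes and the right-hand sum runs over all partitions ν with |ν| ≤ n. Equivalently, since pairs (Γ₁,Γ₂) of nested Young diagrams with n and n+1 boxes correspond to pairs (Γ₂, removable box of Γ₂), this says ∑_{(Γ₁,Γ₂)⊢[n,n+1]} q^{(n+1)−ℓ(Γ₂)} equals the coefficient of z^n in (1/(1−zq))·∏_{k≥1} 1/(1−z^k q^{k−1}); this is the generating function identity for the Poincaré polynomials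 of Hilb^{n,n+1}(0). -/
/-!
Statement 16: Σ_{Y ⊢ n+1} d(Y)·q^{(n+1)−ℓ(Y)} = Σ_{|ν| ≤ n} q^{n−ℓ(ν)}, where d(Y) is
the number of removable boxes of Y; this is the generating function identity for the
Poincaré polynomials of Hilb^{n,n+1}(0).
-/

open Polynomial

/-- The number of removable boxes of a Young diagram: the boxes whose removal leaves a
Young diagram. -/
noncomputable def removableCount (Y : YoungDiagram) : ℕ :=
  Set.ncard {c : ℕ × ℕ | c ∈ Y ∧ IsLowerSet (↑(Y.cells.erase c) : Set (ℕ × ℕ))}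

namespace Statement16Aux

open YoungDiagram

theorem card_eq_sum_rowLens' (μ : YoungDiagram) : μ.card = μ.rowLens.sum := by
  have hcells : μ.cells = (Finset.range (μ.colLen 0)).biUnion μ.row := by
    ext c
    simp only [Finset.mem_biUnion, Finset.mem_range, YoungDiagram.mem_row_iff, mem_cells]
    constructor
    · intro hc
      refine ⟨c.1, ?_, hc, rfl⟩
      rw [← YoungDiagram.mem_iff_lt_colLen]
      exact μ.up_left_mem le_rfl (Nat.zero_le _) hc
    · rintro ⟨i, _, hc, rfl⟩; exact hc
  have hdisj : ∀ i ∈ Finset.range (μ.colLen 0), ∀ j ∈ Finset.range (μ.colLen 0), i ≠ j →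
      Disjoint (μ.row i) (μ.row j) := by
    intro i _ j _ hij
    simp only [Finset.disjoint_left, YoungDiagram.mem_row_iff]
    rintro c ⟨_, rfl⟩ ⟨_, h⟩
    exact hij h
  rw [YoungDiagram.card, hcells, Finset.card_biUnion hdisj, rowLens,
    show ((List.range (μ.colLen 0)).map μ.rowLen).sum
      = ∑ i ∈ Finset.range (μ.colLen 0), μ.rowLen i from rfl]
  exact Finset.sum_congr rfl fun i _ => (μ.rowLen_eq_card).symm

theorem ell_eq_colLen (Γ : YoungDiagram) : ell Γ = Γ.colLen 0 := by
  rw [YoungDiagram.colLen_eq_card]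
  rfl

theorem ell_eq_card_rowLens (μ : YoungDiagram) :
    ell μ = (↑μ.rowLens : Multiset ℕ).card := by
  rw [Multiset.coe_card, YoungDiagram.length_rowLens, ell_eq_colLen]

theorem removable_iff (μ : YoungDiagram) (c : ℕ × ℕ) (hc : c ∈ μ) :
    IsLowerSet (↑(μ.cells.erase c) : Set (ℕ × ℕ)) ↔
      c.2 + 1 = μ.rowLen c.1 ∧ (c.1 + 1, c.2) ∉ μ := by
  constructor
  · intro h
    constructor
    · by_contra hne
      have h1 : c.2 + 1 < μ.rowLen c.1 := by
        have := (mem_iff_lt_rowLen).mp (show (c.1, c.2) ∈ μ from hc)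
        omega
      have hmem : (c.1, c.2 + 1) ∈ μ.cells.erase c := by
        rw [Finset.mem_erase]
        refine ⟨?_, (mem_cells _).mpr (mem_iff_lt_rowLen.mpr h1)⟩
        intro he
        have : c.2 = c.2 + 1 := congrArg Prod.snd he.symm
        omega
      have hle : c ≤ (c.1, c.2 + 1) := ⟨le_rfl, Nat.le_succ _⟩
      have := h hle hmem
      rw [Finset.mem_coe, Finset.mem_erase] at this
      exact this.1 rfl
    · intro hmem'
      have hmem : (c.1 + 1, c.2) ∈ μ.cells.erase c := by
        rw [Finset.mem_erase]
        refine ⟨?_, (mem_cells _).mpr hmem'⟩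
        intro he
        have : c.1 = c.1 + 1 := congrArg Prod.fst he.symm
        omega
      have hle : c ≤ (c.1 + 1, c.2) := ⟨Nat.le_succ _, le_rfl⟩
      have := h hle hmem
      rw [Finset.mem_coe, Finset.mem_erase] at this
      exact this.1 rfl
  · rintro ⟨h1, h2⟩
    intro y x hxy hy
    rw [Finset.mem_coe, Finset.mem_erase] at hy ⊢
    have hyμ : y ∈ μ := (mem_cells _).mp hy.2
    have hxμ : x ∈ μ := μ.up_left_mem hxy.1 hxy.2 hyμ
    refine ⟨?_, (mem_cells _).mpr hxμ⟩
    rintro rfl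
    -- x = c ≤ y, y ∈ μ, y ≠ c
    rcases Nat.lt_or_ge x.2 y.2 with h' | h'
    · have : (x.1, x.2 + 1) ∈ μ := μ.up_left_mem hxy.1 h' hyμ
      rw [mem_iff_lt_rowLen] at this
      omega
    · have h2' : x.2 = y.2 := le_antisymm hxy.2 h'
      have h1' : x.1 < y.1 := by
        rcases Nat.lt_or_ge x.1 y.1 with h'' | h''
        · exact h''
        · exact absurd (Prod.ext (le_antisymm h'' hxy.1) h2'.symm) hy.1
      exact h2 (μ.up_left_mem h1' (le_of_eq h2') hyμ)

theorem mem_rowLens_iff (μ : YoungDiagram) (v : ℕ) :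
    v ∈ μ.rowLens ↔ ∃ i < μ.colLen 0, μ.rowLen i = v := by
  simp [YoungDiagram.rowLens, List.mem_map, List.mem_range]

theorem rowLen_pos_iff (μ : YoungDiagram) (i : ℕ) : 0 < μ.rowLen i ↔ i < μ.colLen 0 := by
  rw [← YoungDiagram.mem_iff_lt_rowLen, ← YoungDiagram.mem_iff_lt_colLen]

theorem removableCount_eq (μ : YoungDiagram) :
    removableCount μ = (↑μ.rowLens : Multiset ℕ).toFinset.card := by
  classical
  have hset : {c : ℕ × ℕ | c ∈ μ ∧ IsLowerSet (↑(μ.cells.erase c) : Set (ℕ × ℕ))}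
      = ↑(μ.cells.filter fun c => c.2 + 1 = μ.rowLen c.1 ∧ (c.1 + 1, c.2) ∉ μ) := by
    ext c
    simp only [Set.mem_setOf_eq, Finset.coe_filter, YoungDiagram.mem_cells]
    exact ⟨fun ⟨h1, h2⟩ => ⟨h1, (removable_iff μ c h1).mp h2⟩,
      fun ⟨h1, h2⟩ => ⟨h1, (removable_iff μ c h1).mpr h2⟩⟩
  rw [removableCount, hset, Set.ncard_coe_finset]
  apply Finset.card_bij (fun c _ => c.2 + 1)
  · -- maps to
    intro c hc
    rw [Finset.mem_filter, YoungDiagram.mem_cells] at hc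
    obtain ⟨h1, h2, _⟩ := hc
    rw [Multiset.mem_toFinset, Multiset.mem_coe, mem_rowLens_iff]
    refine ⟨c.1, ?_, h2.symm⟩
    rw [← rowLen_pos_iff]
    omega
  · -- injective
    intro c hc c' hc' he
    rw [Finset.mem_filter, YoungDiagram.mem_cells] at hc hc'
    obtain ⟨h1, h2, h3⟩ := hc
    obtain ⟨h1', h2', h3'⟩ := hc'
    rw [YoungDiagram.mem_iff_lt_rowLen] at h3 h3'
    have hvv : μ.rowLen c.1 = μ.rowLen c'.1 := by omega
    have hcc : c.1 = c'.1 := by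
      by_contra hne
      rcases Nat.lt_or_ge c.1 c'.1 with h | h
      · have := μ.rowLen_anti (c.1 + 1) c'.1 h
        omega
      · have hlt : c'.1 < c.1 := by omega
        have := μ.rowLen_anti (c'.1 + 1) c.1 hlt
        omega
    have : c.2 = c'.2 := by omega
    exact Prod.ext hcc this
  · -- surjective
    intro v hv
    rw [Multiset.mem_toFinset, Multiset.mem_coe, mem_rowLens_iff] at hv
    obtain ⟨i0, hi0, hv0⟩ := hv
    have hvpos : 0 < v := by rw [← hv0, rowLen_pos_iff]; exact hi0
    have hex : ∃ j, μ.rowLen j < v := by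
      refine ⟨μ.colLen 0, ?_⟩
      have : ¬ 0 < μ.rowLen (μ.colLen 0) := by rw [rowLen_pos_iff]; omega
      omega
    set k := Nat.find hex with hk
    have hklt : μ.rowLen k < v := Nat.find_spec hex
    have hi0k : i0 < k := by
      by_contra h
      have := μ.rowLen_anti k i0 (by omega)
      omega
    have hkpos : 0 < k := by omega
    have hnot : ¬ μ.rowLen (k - 1) < v := Nat.find_min hex (by omega)
    have heq : μ.rowLen (k - 1) = v := by
      have := μ.rowLen_anti i0 (k - 1) (by omega)
      omega
    refine ⟨(k - 1, v - 1), ?_, by omega⟩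
    rw [Finset.mem_filter, YoungDiagram.mem_cells, YoungDiagram.mem_iff_lt_rowLen]
    dsimp only
    refine ⟨by omega, by omega, ?_⟩
    rw [YoungDiagram.mem_iff_lt_rowLen]
    have : k - 1 + 1 = k := by omega
    rw [this]
    omega

theorem ofRowLens_congr {w w' : List ℕ} (h : w = w') (hw : w.SortedGE)
    (hw' : w'.SortedGE) : ofRowLens w hw = ofRowLens w' hw' := by subst h; rfl

/-- The sorted list of parts of a partition. -/
def partsList {k : ℕ} (p : Nat.Partition k) : List ℕ := p.parts.sort (· ≥ ·)

theorem partsList_sorted {k : ℕ} (p : Nat.Partition k) : (partsList p).SortedGE :=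
  (Multiset.pairwise_sort _ _).sortedGE

theorem partsList_coe {k : ℕ} (p : Nat.Partition k) : (↑(partsList p) : Multiset ℕ) = p.parts :=
  Multiset.sort_eq _ _

theorem partsList_pos {k : ℕ} (p : Nat.Partition k) : ∀ x ∈ partsList p, 0 < x := by
  intro x hx
  exact p.parts_pos (by rw [← partsList_coe p]; exact hx)

/-- Young diagrams with `k` boxes are equivalent to partitions of `k`. -/
noncomputable def ydEquiv (k : ℕ) : Nat.Partition k ≃ {Y : YoungDiagram // Y.card = k} where
  toFun p := ⟨ofRowLens (partsList p) (partsList_sorted p), by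
    rw [card_eq_sum_rowLens', rowLens_ofRowLens_eq_self (partsList_pos p)]
    have : ((partsList p : Multiset ℕ)).sum = k := by rw [partsList_coe]; exact p.parts_sum
    simpa using this⟩
  invFun Y := ⟨(↑Y.1.rowLens : Multiset ℕ), fun hi => Y.1.pos_of_mem_rowLens _ hi, by
    have := card_eq_sum_rowLens' Y.1
    rw [Y.2] at this
    simpa using this.symm⟩
  left_inv p := by
    apply Nat.Partition.ext
    simp only [rowLens_ofRowLens_eq_self (partsList_pos p), partsList_coe]
  right_inv Y := by
    apply Subtype.ext
    dsimp only
    refine (ofRowLens_congr ?_ _ Y.1.rowLens_sorted).trans ofRowLens_to_rowLens_eq_self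
    apply List.Perm.eq_of_sortedGE (partsList_sorted _)
      (Y.1.rowLens_sorted) (Multiset.coe_eq_coe.mp ?_)
    rw [partsList_coe]

theorem ydEquiv_rowLens {k : ℕ} (p : Nat.Partition k) :
    (↑((ydEquiv k p : YoungDiagram).rowLens) : Multiset ℕ) = p.parts := by
  show (↑((ofRowLens (partsList p) (partsList_sorted p)).rowLens) : Multiset ℕ) = p.parts
  rw [rowLens_ofRowLens_eq_self (partsList_pos p), partsList_coe]

theorem part_heq {m m' : ℕ} (h : m = m') (p : Nat.Partition m) (q : Nat.Partition m')
    (hp : p.parts = q.parts) : HEq p q := by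
  subst h
  exact heq_of_eq (Nat.Partition.ext hp)

theorem key (n : ℕ) :
    ∑ p : Nat.Partition (n + 1),
        (p.parts.toFinset.card : Polynomial ℤ) * (X : Polynomial ℤ) ^ (n + 1 - p.parts.card)
      = ∑ m ∈ Finset.range (n + 1),
          ∑ ν : Nat.Partition m, (X : Polynomial ℤ) ^ (n - ν.parts.card) := by
  classical
  have l1 : ∀ p : Nat.Partition (n + 1),
      (p.parts.toFinset.card : Polynomial ℤ) * (X : Polynomial ℤ) ^ (n + 1 - p.parts.card)
        = ∑ _s ∈ p.parts.toFinset, (X : Polynomial ℤ) ^ (n + 1 - p.parts.card) := by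
    intro p
    rw [Finset.sum_const, nsmul_eq_mul]
  simp_rw [l1]
  rw [← Finset.sum_sigma (Finset.univ : Finset (Nat.Partition (n + 1)))
      (fun p => p.parts.toFinset) (fun x => (X : Polynomial ℤ) ^ (n + 1 - x.1.parts.card))]
  rw [show (∑ m ∈ Finset.range (n + 1),
        ∑ ν : Nat.Partition m, (X : Polynomial ℤ) ^ (n - ν.parts.card))
      = ∑ m ∈ Finset.range (n + 1), ∑ ν ∈ (Finset.univ : Finset (Nat.Partition m)),
          (X : Polynomial ℤ) ^ (n - ν.parts.card) from rfl]
  rw [← Finset.sum_sigma (Finset.range (n + 1)) (fun m => (Finset.univ : Finset (Nat.Partition m)))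
      (fun x => (X : Polynomial ℤ) ^ (n - x.2.parts.card))]
  -- now a bijection between sigma types
  refine Finset.sum_bij' (fun a ha => ?i) (fun b hb => ?j) ?_ ?_ ?_ ?_ ?_
  case i =>
    -- a : Σ p : Partition (n+1), ℕ, send to ⟨n+1-a.2, erase a.2⟩
    refine ⟨n + 1 - a.2, ⟨a.1.parts.erase a.2, ?_, ?_⟩⟩
    · intro i hi
      exact a.1.parts_pos (Multiset.mem_of_mem_erase hi)
    · rw [Finset.mem_sigma] at ha
      have hmem : a.2 ∈ a.1.parts := Multiset.mem_toFinset.mp ha.2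
      have h1 : a.2 + (a.1.parts.erase a.2).sum = a.1.parts.sum := by
        rw [← Multiset.sum_cons, Multiset.cons_erase hmem]
      have h2 : a.1.parts.sum = n + 1 := a.1.parts_sum
      have h3 : a.2 ≤ n + 1 := by omega
      omega
  case j =>
    -- b : Σ m, Partition m with m ≤ n; send to ⟨insert (n+1-m) parts, n+1-m⟩
    refine ⟨⟨(n + 1 - b.1) ::ₘ b.2.parts, ?_, ?_⟩, n + 1 - b.1⟩
    · intro i hi
      rcases Multiset.mem_cons.mp hi with rfl | hi
      · have h1 := (Finset.mem_sigma.mp hb).1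
        rw [Finset.mem_range] at h1
        omega
      · exact b.2.parts_pos hi
    · rw [Multiset.sum_cons, b.2.parts_sum]
      have h1 := (Finset.mem_sigma.mp hb).1
      rw [Finset.mem_range] at h1
      omega
  · -- hi : maps into t
    intro a ha
    rw [Finset.mem_sigma] at ha
    have hmem : a.2 ∈ a.1.parts := Multiset.mem_toFinset.mp ha.2
    have hpos : 0 < a.2 := a.1.parts_pos hmem
    refine Finset.mem_sigma.mpr ⟨?_, Finset.mem_univ _⟩
    show n + 1 - a.2 ∈ Finset.range (n + 1)
    rw [Finset.mem_range]
    omega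
  · -- hj : maps into s
    intro b hb
    rw [Finset.mem_sigma]
    exact ⟨Finset.mem_univ _, Multiset.mem_toFinset.mpr (Multiset.mem_cons_self _ _)⟩
  · -- left_inv
    intro a ha
    obtain ⟨p, s⟩ := a
    rw [Finset.mem_sigma] at ha
    have hmem : s ∈ p.parts := Multiset.mem_toFinset.mp ha.2
    have hle : s ≤ n + 1 := by
      have := Multiset.single_le_sum (fun x (_ : x ∈ p.parts) => Nat.zero_le x) _ hmem
      rw [p.parts_sum] at this
      exact this
    dsimp only
    refine Sigma.ext ?_ ?_
    · -- first components
      apply Nat.Partition.ext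
      dsimp only
      rw [show n + 1 - (n + 1 - s) = s by omega]
      exact Multiset.cons_erase hmem
    · dsimp only
      rw [show n + 1 - (n + 1 - s) = s by omega]
  · -- right_inv
    intro b hb
    obtain ⟨m, ν⟩ := b
    rw [Finset.mem_sigma, Finset.mem_range] at hb
    have hm : m ≤ n := Nat.lt_succ_iff.mp hb.1
    refine Sigma.ext (show n + 1 - (n + 1 - m) = m by omega) ?_
    apply part_heq (show n + 1 - (n + 1 - m) = m by omega)
    show ((n + 1 - m) ::ₘ ν.parts).erase (n + 1 - m) = ν.parts
    rw [Multiset.erase_cons_head]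
  · -- summand equality
    intro a ha
    rw [Finset.mem_sigma] at ha
    have hmem : a.2 ∈ a.1.parts := Multiset.mem_toFinset.mp ha.2
    have hcard : (a.1.parts.erase a.2).card = a.1.parts.card - 1 :=
      Multiset.card_erase_of_mem hmem
    have hpos : 0 < a.1.parts.card := Multiset.card_pos.mpr (by
      intro h0
      have := a.1.parts_sum
      rw [h0] at this
      simp at this)
    dsimp only
    rw [hcard]
    congr 1
    have hpos' := hpos
    omega

end Statement16Aux

open Statement16Aux in
/-- `Σ_{Y ⊢ n+1} d(Y)·q^{(n+1)−ℓ(Y)} = Σ_{ν, |ν| ≤ n} q^{n−ℓ(ν)}`. -/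
theorem statement16 (n : ℕ) :
    (∑ᶠ Y : {Y : YoungDiagram // Y.card = n + 1},
        (removableCount Y.1 : Polynomial ℤ) * (X : Polynomial ℤ) ^ ((n + 1) - ell Y.1))
      = ∑ m ∈ Finset.range (n + 1),
          ∑ ν : Nat.Partition m, (X : Polynomial ℤ) ^ (n - ν.parts.card) := by
  classical
  letI : Fintype {Y : YoungDiagram // Y.card = n + 1} := Fintype.ofEquiv _ (ydEquiv (n + 1))
  rw [finsum_eq_sum_of_fintype]
  rw [← Equiv.sum_comp (ydEquiv (n + 1)) (fun Y : {Y : YoungDiagram // Y.card = n + 1} =>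
      (removableCount Y.1 : Polynomial ℤ) * (X : Polynomial ℤ) ^ ((n + 1) - ell Y.1))]
  rw [← key n]
  apply Finset.sum_congr rfl
  intro p _
  rw [removableCount_eq, ell_eq_card_rowLens, ydEquiv_rowLens]
end
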